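/- arXiv:0812.2826 — 3 statements merged into one kernel-verified Lean document; each statement's English description precedes it below -/
import Mathlib

section
/- Let N be an integer and A = {a_1 < a_2 < ... < a_r} ⊆ {1,...,N−1}. Then for every n, the number of partitions of n in which each part is congruent to 0 or some a_i mod N, only multiples of N may repeat, successive parts differ by at most N (strictly less than N if either part is divisible by N), and the smallest part is less than N, equals the number of partitions of n into distinct parts each congruent to some a_i mod N. -/
open Nat

/-- The parts of a partition listed in nonincreasing order. -/
def sortedParts {n : ℕ} (p : n.Partition) : List ℕ := (p.parts.sort (· ≤ ·)).reverse

/-- `lo p` is the number of odd parts of `p` (with multiplicity). -/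
def lo {n : ℕ} (p : n.Partition) : ℕ := (p.parts.filter (fun i => i % 2 = 1)).card

/-- `la p` is the alternating sum `λ₁ - λ₂ + λ₃ - ⋯` of the partition `p`. -/
def la {n : ℕ} (p : n.Partition) : ℤ :=
  ∑ i ∈ Finset.range (sortedParts p).length, (-1 : ℤ) ^ i * ((sortedParts p).getD i 0 : ℤ)

/-- `nd p` is the number of distinct part-values of `p`. -/
def nd {n : ℕ} (p : n.Partition) : ℕ := p.parts.toFinset.card

/-- `no p` is the number of distinct part-values of `p` occurring with odd multiplicity. -/
def no {n : ℕ} (p : n.Partition) : ℕ :=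
  (p.parts.toFinset.filter (fun a => p.parts.count a % 2 = 1)).card

/-- `nc p` is the number of chains (maximal runs of consecutive integers) of a
partition with distinct parts: parts `i` such that `i+1` is not a part. -/
def nc {n : ℕ} (p : n.Partition) : ℕ :=
  (p.parts.toFinset.filter (fun i => i + 1 ∉ p.parts)).card

/-- `r2 p` is the number of parts of `p` congruent to 2 mod 4. -/
def r2 {n : ℕ} (p : n.Partition) : ℕ := (p.parts.filter (fun i => i % 4 = 2)).card

/-- Only even parts may be repeated. -/
def onlyEvenRepeats {n : ℕ} (p : n.Partition) : Prop :=
  ∀ i, 1 < p.parts.count i → 2 ∣ i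

/-- Successive parts differ by at most 4, strictly less than 4 if either part is even,
and the smallest part is less than 4 (the class 𝒜₁ of Chen–Gao–Ji–Li). -/
def A1cond {n : ℕ} (p : n.Partition) : Prop :=
  onlyEvenRepeats p ∧
  (∀ j, j + 1 < (sortedParts p).length →
    (sortedParts p).getD j 0 ≤ (sortedParts p).getD (j + 1) 0 + 4 ∧
    ((2 ∣ (sortedParts p).getD j 0 ∨ 2 ∣ (sortedParts p).getD (j + 1) 0) →
      (sortedParts p).getD j 0 < (sortedParts p).getD (j + 1) 0 + 4)) ∧
  (sortedParts p).getD ((sortedParts p).length - 1) 0 < 4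

/-- No part divisible by 4 and only even parts repeated (the class 𝒜₂). -/
def A2cond {n : ℕ} (p : n.Partition) : Prop :=
  (∀ i ∈ p.parts, ¬ (4 ∣ i)) ∧ onlyEvenRepeats p

/-- `loConj p` is the number of odd parts of the conjugate partition of `p`. -/
def loConj {n : ℕ} (p : n.Partition) : ℕ :=
  ((Finset.Icc 1 n).filter (fun i => (p.parts.filter (fun j => i ≤ j)).card % 2 = 1)).card

namespace AO
open List

def inc (prev s : ℕ) : ℕ := if (0 < prev ∨ 0 < s) ∧ s ≤ prev then 1 else 0

def go (N : ℕ) : ℕ → ℕ → List ℕ → List ℕ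
  | _, _, [] => []
  | prev, q, s :: t => (N * (q + inc prev s) + s) :: go N s (q + inc prev s) t

def rel (N x y : ℕ) : Prop :=
  x ≤ y ∧ y ≤ x + N ∧ ((N ∣ x ∨ N ∣ y) → y < x + N) ∧ (x = y → N ∣ x)

variable {N : ℕ}

lemma key (hN : 0 < N) {x y : ℕ} (h : rel N x y) :
    y / N = x / N + inc (x % N) (y % N) := by
  obtain ⟨h1, h2, h3, h4⟩ := h
  set q := x / N with hq
  set s := x % N with hs
  set q' := y / N with hq'
  set s' := y % N with hs'
  have hx : N * q + s = x := Nat.div_add_mod x N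
  have hy : N * q' + s' = y := Nat.div_add_mod y N
  have hsN : s < N := Nat.mod_lt _ hN
  have hs'N : s' < N := Nat.mod_lt _ hN
  have hdx : N ∣ x ↔ s = 0 := by rw [hs, Nat.dvd_iff_mod_eq_zero]
  have hdy : N ∣ y ↔ s' = 0 := by rw [hs', Nat.dvd_iff_mod_eq_zero]
  have cancel_le : ∀ a b : ℕ, N * a ≤ N * b → a ≤ b := fun a b hab =>
    Nat.le_of_mul_le_mul_left hab hN
  unfold inc
  split
  · -- inc = 1 : (0 < s ∨ 0 < s') ∧ s' ≤ s
    rename_i hc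
    obtain ⟨hc1, hc2⟩ := hc
    -- show q' = q + 1
    have hq1 : q + 1 ≤ q' := by
      by_contra hcon
      push_neg at hcon
      have : q' ≤ q := by omega
      have : N * q' ≤ N * q := Nat.mul_le_mul_left N this
      rcases Nat.lt_or_ge s' s with hlt | hge
      · omega
      · have hss : s' = s := le_antisymm hc2 hge
        have hspos : 0 < s := by omega
        have hxy : x ≠ y := by
          intro hxyeq
          have := h4 hxyeq
          rw [hdx] at this; omega
        omega
    have hq2 : q' ≤ q + 1 := by
      by_contra hcon
      push_neg at hcon
      have : q + 2 ≤ q' := by omega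
      have : N * (q + 2) ≤ N * q' := Nat.mul_le_mul_left N this
      have hexp : N * (q + 2) = N * q + N + N := by ring
      omega
    omega
  · -- inc = 0
    rename_i hc
    have hcases : s < s' ∨ (s = 0 ∧ s' = 0) := by
      by_contra hcon
      push_neg at hcon
      apply hc
      omega
    rcases hcases with hlt | ⟨h0, h0'⟩
    · have hq1 : q ≤ q' := by
        by_contra hcon
        push_neg at hcon
        have : q' + 1 ≤ q := by omega
        have : N * (q' + 1) ≤ N * q := Nat.mul_le_mul_left N this
        have hexp : N * (q' + 1) = N * q' + N := by ring
        omega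
      have hq2 : q' ≤ q := by
        by_contra hcon
        push_neg at hcon
        have : q + 1 ≤ q' := by omega
        have : N * (q + 1) ≤ N * q' := Nat.mul_le_mul_left N this
        have hexp : N * (q + 1) = N * q + N := by ring
        omega
      omega
    · have hdvd : y < x + N := h3 (Or.inl (hdx.2 h0))
      have hq1 : q ≤ q' := by
        by_contra hcon
        push_neg at hcon
        have : q' + 1 ≤ q := by omega
        have : N * (q' + 1) ≤ N * q := Nat.mul_le_mul_left N this
        have hexp : N * (q' + 1) = N * q' + N := by ring
        omega
      have hq2 : q' ≤ q := by
        by_contra hcon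
        push_neg at hcon
        have : q + 1 ≤ q' := by omega
        have : N * (q + 1) ≤ N * q' := Nat.mul_le_mul_left N this
        have hexp : N * (q + 1) = N * q + N := by ring
        omega
      omega


lemma dvd_mul_add_iff {q r : ℕ} (hr : r < N) : N ∣ (N * q + r) ↔ r = 0 := by
  constructor
  · intro h
    have h2 : N ∣ r := (Nat.dvd_add_right ⟨q, rfl⟩).mp h
    exact Nat.eq_zero_of_dvd_of_lt h2 hr
  · rintro rfl; exact ⟨q, by ring⟩

lemma rel_step (hN : 0 < N) {prev s : ℕ} (hp : prev < N) (hs : s < N) (q : ℕ) :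
    rel N (N * q + prev) (N * (q + inc prev s) + s) := by
  have hdx := dvd_mul_add_iff (N := N) (q := q) (r := prev) hp
  have hdy := dvd_mul_add_iff (N := N) (q := q + inc prev s) (r := s) hs
  unfold inc
  split
  · rename_i hc
    obtain ⟨hc1, hc2⟩ := hc
    have hprev : 0 < prev := by omega
    have hexp : N * (q + 1) = N * q + N := by ring
    refine ⟨by omega, by omega, ?_, by omega⟩
    intro hd
    rcases hd with hd | hd
    · rw [dvd_mul_add_iff hp] at hd; omega
    · rw [hexp] at hd ⊢
      rw [show N * q + N + s = N * (q+1) + s by ring] at hd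
      rw [dvd_mul_add_iff hs] at hd
      omega
  · rename_i hc
    have hcases : prev < s ∨ (s = 0 ∧ prev = 0) := by
      by_cases h0 : 0 < prev ∨ 0 < s
      · have : ¬ s ≤ prev := fun hle => hc ⟨h0, hle⟩
        omega
      · omega
    simp only [Nat.add_zero]
    refine ⟨by omega, by omega, by omega, ?_⟩
    intro he
    have : prev = s := by omega
    rcases hcases with h | ⟨h1, h2⟩
    · omega
    · exact hdx.mpr h2

lemma go_map_mod (hN : 0 < N) :
    ∀ (w : List ℕ) (prev q : ℕ), (∀ x ∈ w, x < N) → (go N prev q w).map (· % N) = w := by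
  intro w
  induction w with
  | nil => intro _ _ _; rfl
  | cons s t ih =>
    intro prev q hw
    simp only [go, List.map_cons]
    rw [Nat.mul_add_mod]
    rw [Nat.mod_eq_of_lt (hw s (by simp))]
    rw [ih s _ (fun x hx => hw x (by simp [hx]))]

lemma go_chain (hN : 0 < N) :
    ∀ (w : List ℕ) (prev q : ℕ), (∀ x ∈ w, x < N) → prev < N →
      Chain' (rel N) ((N * q + prev) :: go N prev q w) := by
  intro w
  induction w with
  | nil => intro _ _ _ _; simp [go, List.Chain', List.isChain_singleton]
  | cons s t ih =>
    intro prev q hw hp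
    have hs : s < N := hw s (by simp)
    simp only [go]
    exact List.IsChain.cons_cons (rel_step hN hp hs q) (ih s _ (fun x hx => hw x (by simp [hx])) hs)

lemma go_recon (hN : 0 < N) :
    ∀ (ℓ : List ℕ) (x₀ : ℕ), Chain' (rel N) (x₀ :: ℓ) →
      go N (x₀ % N) (x₀ / N) (ℓ.map (· % N)) = ℓ := by
  intro ℓ
  induction ℓ with
  | nil => intro _ _; rfl
  | cons y t ih =>
    intro x₀ hch
    have h1 : rel N x₀ y := (List.isChain_cons_cons.mp hch).1
    have h2 : Chain' (rel N) (y :: t) := (List.isChain_cons_cons.mp hch).2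
    simp only [List.map_cons, go]
    have hk := key hN h1
    rw [← hk, Nat.div_add_mod y N]
    rw [ih y h2]

lemma go_pos (hN : 0 < N) :
    ∀ (w : List ℕ) (prev q : ℕ), 0 < N * q + prev → ∀ v ∈ go N prev q w, 0 < v := by
  intro w
  induction w with
  | nil => intro _ _ _ v hv; simp [go] at hv
  | cons s t ih =>
    intro prev q hpos v hv
    simp only [go, List.mem_cons] at hv
    have hv1 : 0 < N * (q + inc prev s) + s := by
      unfold inc
      split
      · have : N * (q + 1) = N * q + N := by ring
        omega
      · rename_i hc
        have h5 : prev < s ∨ (s = 0 ∧ prev = 0) := by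
          by_cases h0 : 0 < prev ∨ 0 < s
          · have : ¬ s ≤ prev := fun hle => hc ⟨h0, hle⟩
            omega
          · omega
        have h6 : N * (q + 0) = N * q := by ring
        omega
    rcases hv with rfl | hv
    · exact hv1
    · exact ih s _ hv1 v hv

lemma go_zero_cons (hs : 0 < s) (t : List ℕ) : go N 0 0 (s :: t) = s :: go N s 0 t := by
  simp only [go, inc]
  rw [if_neg (by omega)]
  norm_num


def toWord : List ℕ → List ℕ → List ℕ
  | [], _ => []
  | _ :: _, [] => []
  | b₁ :: b', k₁ :: k' => b₁ :: (List.replicate k₁ 0 ++ toWord b' k')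

def splitZ : List ℕ → ℕ × List ℕ
  | [] => (0, [])
  | 0 :: t => ((splitZ t).1 + 1, (splitZ t).2)
  | (s+1) :: t => (0, (s+1) :: t)

lemma splitZ_len : ∀ t : List ℕ, (splitZ t).2.length ≤ t.length
  | [] => le_refl _
  | 0 :: t => le_trans (splitZ_len t) (by simp)
  | (s+1) :: t => le_refl _

def getK : List ℕ → List ℕ
  | [] => []
  | _ :: t => (splitZ t).1 :: getK (splitZ t).2
  termination_by w => w.length
  decreasing_by
    simp only [List.length_cons]
    exact Nat.lt_succ_of_le (splitZ_len t)

def getB (w : List ℕ) : List ℕ := w.filter (· ≠ 0)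

lemma splitZ_replicate : ∀ (k : ℕ) (t : List ℕ), t.head? ≠ some 0 →
    splitZ (List.replicate k 0 ++ t) = (k, t) := by
  intro k
  induction k with
  | zero =>
    intro t ht
    simp only [List.replicate, List.nil_append]
    match t with
    | [] => rfl
    | 0 :: t' => simp at ht
    | (s+1) :: t' => rfl
  | succ k ih =>
    intro t ht
    rw [List.replicate_succ, List.cons_append]
    show ((splitZ (List.replicate k 0 ++ t)).1 + 1, (splitZ (List.replicate k 0 ++ t)).2) = _
    rw [ih t ht]

lemma splitZ_decomp : ∀ t : List ℕ,
    List.replicate (splitZ t).1 0 ++ (splitZ t).2 = t ∧ (splitZ t).2.head? ≠ some 0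
  | [] => ⟨rfl, by simp [splitZ]⟩
  | 0 :: t => by
    obtain ⟨h1, h2⟩ := splitZ_decomp t
    refine ⟨?_, h2⟩
    simp only [splitZ, List.replicate_succ, List.cons_append]
    rw [h1]
  | (s+1) :: t => ⟨rfl, by simp [splitZ]⟩

lemma toWord_head? : ∀ (b k : List ℕ), (∀ x ∈ b, x ≠ 0) → (toWord b k).head? ≠ some 0 := by
  intro b k hb
  match b, k with
  | [], _ => simp [toWord]
  | x :: b', [] => simp [toWord]
  | x :: b', k₁ :: k' =>
    simp only [toWord, List.head?_cons, ne_eq, Option.some.injEq]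
    exact hb x (by simp)

lemma getB_toWord : ∀ (b k : List ℕ), (∀ x ∈ b, x ≠ 0) → b.length = k.length →
    getB (toWord b k) = b := by
  intro b
  induction b with
  | nil => intro k _ _; simp [toWord, getB]
  | cons b₁ b' ih =>
    intro k hb hl
    match k with
    | [] => simp at hl
    | k₁ :: k' =>
      simp only [toWord, getB, List.filter_cons, List.filter_append]
      have hb₁ : b₁ ≠ 0 := hb b₁ (by simp)
      rw [if_pos (by simpa using hb₁)]
      have hrep : (List.replicate k₁ (0:ℕ)).filter (· ≠ 0) = [] := by
        simp [List.filter_replicate]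
      rw [hrep]
      simp only [List.nil_append]
      have := ih k' (fun x hx => hb x (by simp [hx])) (by simpa using hl)
      rw [show (toWord b' k').filter (· ≠ 0) = getB (toWord b' k') from rfl, this]

lemma getK_toWord : ∀ (b k : List ℕ), (∀ x ∈ b, x ≠ 0) → b.length = k.length →
    getK (toWord b k) = k := by
  intro b
  induction b with
  | nil =>
    intro k _ hl
    match k with
    | [] => simp [toWord, getK]
    | _ :: _ => simp at hl
  | cons b₁ b' ih =>
    intro k hb hl
    match k with
    | [] => simp at hl
    | k₁ :: k' =>
      simp only [toWord]
      rw [getK]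
      have hhead : (toWord b' k').head? ≠ some 0 :=
        toWord_head? b' k' (fun x hx => hb x (by simp [hx]))
      rw [splitZ_replicate k₁ _ hhead]
      simp only []
      rw [ih k' (fun x hx => hb x (by simp [hx])) (by simpa using hl)]

lemma getB_zeros_append : ∀ (k : ℕ) (t : List ℕ), getB (List.replicate k 0 ++ t) = getB t := by
  intro k t
  simp only [getB, List.filter_append]
  have : (List.replicate k (0:ℕ)).filter (· ≠ 0) = [] := by simp [List.filter_replicate]
  rw [this, List.nil_append]

lemma toWord_recon_aux : ∀ (n : ℕ) (w : List ℕ), w.length ≤ n → w.head? ≠ some 0 →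
    toWord (getB w) (getK w) = w := by
  intro n
  induction n with
  | zero =>
    intro w hl _
    have : w = [] := List.length_eq_zero_iff.mp (Nat.le_zero.mp hl)
    subst this; rfl
  | succ n ih =>
    intro w hl hh
    match w with
    | [] => rfl
    | s :: t =>
      have hs : s ≠ 0 := by simpa using hh
      have hgB : getB (s :: t) = s :: getB t := by
        simp only [getB, List.filter_cons]
        rw [if_pos (by simpa using hs)]
      have hgK : getK (s :: t) = (splitZ t).1 :: getK (splitZ t).2 := by rw [getK]
      obtain ⟨hdec, hhd⟩ := splitZ_decomp t
      have hgBt : getB t = getB (splitZ t).2 := by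
        conv_lhs => rw [← hdec]
        rw [getB_zeros_append]
      rw [hgB, hgK, hgBt]
      have hlen2 : (splitZ t).2.length ≤ n := le_trans (splitZ_len t) (by simpa using hl)
      have hIH := ih _ hlen2 hhd
      show s :: (List.replicate (splitZ t).1 0 ++ toWord (getB (splitZ t).2) (getK (splitZ t).2)) = s :: t
      rw [hIH, hdec]

lemma toWord_recon (w : List ℕ) (hh : w.head? ≠ some 0) : toWord (getB w) (getK w) = w :=
  toWord_recon_aux w.length w (le_refl _) hh

lemma getK_length : ∀ (n : ℕ) (w : List ℕ), w.length ≤ n → w.head? ≠ some 0 →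
    (getK w).length = (getB w).length := by
  intro n
  induction n with
  | zero =>
    intro w hl _
    have : w = [] := List.length_eq_zero_iff.mp (Nat.le_zero.mp hl)
    subst this; simp [getK, getB]
  | succ n ih =>
    intro w hl hh
    match w with
    | [] => simp [getK, getB]
    | s :: t =>
      have hs : s ≠ 0 := by simpa using hh
      have hgB : getB (s :: t) = s :: getB t := by
        simp only [getB, List.filter_cons]
        rw [if_pos (by simpa using hs)]
      obtain ⟨hdec, hhd⟩ := splitZ_decomp t
      have hgBt : getB t = getB (splitZ t).2 := by
        conv_lhs => rw [← hdec]
        rw [getB_zeros_append]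
      rw [getK, hgB, hgBt]
      have hlen2 : (splitZ t).2.length ≤ n := le_trans (splitZ_len t) (by simpa using hl)
      simp only [List.length_cons]
      rw [ih _ hlen2 hhd]

lemma getB_mem {w : List ℕ} {x : ℕ} (hx : x ∈ getB w) : x ∈ w ∧ x ≠ 0 := by
  simp only [getB, List.mem_filter] at hx
  exact ⟨hx.1, by simpa using hx.2⟩

lemma toWord_mem : ∀ (b k : List ℕ) (x : ℕ), x ∈ toWord b k → x = 0 ∨ x ∈ b := by
  intro b
  induction b with
  | nil => intro k x hx; simp [toWord] at hx
  | cons b₁ b' ih =>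
    intro k x hx
    match k with
    | [] => simp [toWord] at hx
    | k₁ :: k' =>
      simp only [toWord, List.mem_cons, List.mem_append, List.mem_replicate] at hx
      rcases hx with rfl | hx | hx
      · right; simp
      · exact Or.inl hx.2
      · rcases ih k' x hx with h | h
        · exact Or.inl h
        · right; simp [h]


def phi : List Bool → List ℕ → List ℕ
  | _, [] => []
  | [], k₁ :: _ => [k₁]
  | true :: δ', k₁ :: k' => phi δ' k' ++ [k₁ + (phi δ' k').getLastD 0]
  | false :: δ', k₁ :: k' =>
    if k₁ = 0 then 0 :: phi δ' k'
    else ((phi δ' k').map (· + 1)) ++ [k₁ + (phi δ' k').getLastD 0]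

def iphi : List Bool → List ℕ → List ℕ
  | _, [] => []
  | [], f₁ :: _ => [f₁]
  | true :: δ', f₁ :: f' =>
    ((f₁ :: f').getLastD 0 - (f₁ :: f').dropLast.getLastD 0) :: iphi δ' (f₁ :: f').dropLast
  | false :: δ', f₁ :: f' =>
    if f₁ = 0 then 0 :: iphi δ' f'
    else ((f₁ :: f').getLastD 0 + 1 - (f₁ :: f').dropLast.getLastD 0) ::
      iphi δ' ((f₁ :: f').dropLast.map (· - 1))

def delta : List ℕ → List Bool
  | [] => []
  | [_] => []
  | b₁ :: b₂ :: b' => decide (b₂ ≤ b₁) :: delta (b₂ :: b')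

lemma delta_length : ∀ b : List ℕ, (delta b).length = b.length - 1
  | [] => rfl
  | [_] => rfl
  | b₁ :: b₂ :: b' => by
    show (delta (b₂ :: b')).length + 1 = _
    rw [delta_length (b₂ :: b')]
    simp

lemma phi_ne_nil : ∀ (δ : List Bool) (k : List ℕ), k ≠ [] → phi δ k ≠ [] := by
  intro δ k hk
  match δ, k with
  | [], k₁ :: k' => simp [phi]
  | true :: δ', k₁ :: k' => simp [phi]
  | false :: δ', k₁ :: k' =>
    simp only [phi]
    split <;> simp

lemma phi_length : ∀ (δ : List Bool) (k : List ℕ), k.length = δ.length + 1 →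
    (phi δ k).length = k.length := by
  intro δ
  induction δ with
  | nil =>
    intro k hk
    match k with
    | [k₁] => rfl
  | cons d δ' ih =>
    intro k hk
    match k with
    | k₁ :: k' =>
      have hk' : k'.length = δ'.length + 1 := by simpa using hk
      have ihl := ih k' hk'
      cases d
      · simp only [phi]
        split
        · simp [ihl]
        · simp [ihl]
      · simp [phi, ihl]

lemma getLastD_map_sub_one {l : List ℕ} (h : l ≠ []) :
    (l.map (· - 1)).getLastD 0 = l.getLastD 0 - 1 := by
  induction l with
  | nil => exact absurd rfl h
  | cons x t ih =>
    cases t with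
    | nil => simp
    | cons y t' => simpa using ih (by simp)

lemma getLastD_map_add_one {l : List ℕ} (h : l ≠ []) :
    (l.map (· + 1)).getLastD 0 = l.getLastD 0 + 1 := by
  induction l with
  | nil => exact absurd rfl h
  | cons x t ih =>
    cases t with
    | nil => simp
    | cons y t' => simpa using ih (by simp)

lemma sorted_dropLast_last : ∀ (G : List ℕ) (x : ℕ), Chain' (· ≤ ·) (G ++ [x]) →
    G.getLastD 0 ≤ x := by
  intro G
  induction G with
  | nil => intro x _; exact Nat.zero_le x
  | cons g G' ih =>
    intro x hch
    rw [List.cons_append] at hch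
    have hch' := hch.tail
    cases G' with
    | nil =>
      simp only [List.getLastD_cons, List.getLastD_nil]
      simpa using List.isChain_cons_cons.mp hch |>.1
    | cons y t =>
      have := ih x hch'
      simp only [List.getLastD_cons] at this ⊢
      exact this

lemma chain_le_all : ∀ (l : List ℕ), Chain' (· ≤ ·) l → ∀ y ∈ l, l.headI ≤ y := by
  intro l hl y hy
  cases l with
  | nil => simp at hy
  | cons x t =>
    rcases List.mem_cons.mp hy with rfl | hy
    · exact le_refl _
    · have hp : List.Pairwise (· ≤ ·) (x :: t) := List.isChain_iff_pairwise.mp hl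
      exact List.rel_of_pairwise_cons hp hy

lemma phi_chain : ∀ (δ : List Bool) (k : List ℕ), Chain' (· ≤ ·) (phi δ k) := by
  intro δ
  induction δ with
  | nil =>
    intro k
    match k with
    | [] => simp [phi, List.Chain']
    | k₁ :: k' => simp [phi, List.Chain']
  | cons d δ' ih =>
    intro k
    match k with
    | [] => simp [phi, List.Chain']
    | k₁ :: k' =>
      have ihc := ih k'
      cases d
      · simp only [phi]
        split
        · exact List.isChain_cons.mpr ⟨fun y hy => Nat.zero_le y, ihc⟩
        · apply List.IsChain.append
          · exact List.isChain_map_of_isChain _ (fun a b hab => by omega) ihc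
          · exact List.isChain_singleton _
          · intro x hx y hy
            simp only [List.head?_cons, Option.mem_def, Option.some.injEq] at hy
            subst hy
            rw [List.getLast?_map] at hx
            rcases Option.map_eq_some_iff.mp hx with ⟨a, ha, rfl⟩
            have : (phi δ' k').getLastD 0 = a := by
              rw [List.getLastD_eq_getLast?, ha]; rfl
            omega
      · simp only [phi]
        apply List.IsChain.append ihc (List.isChain_singleton _)
        intro x hx y hy
        simp only [List.head?_cons, Option.mem_def, Option.some.injEq] at hy
        subst hy
        have : (phi δ' k').getLastD 0 = x := by
          rw [List.getLastD_eq_getLast?, Option.mem_def.mp hx]; rfl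
        omega

lemma getLastD_ne_nil_mem {l : List ℕ} (h : l ≠ []) : l.getLastD 0 ∈ l := by
  rw [List.getLastD_eq_getLast?, List.getLast?_eq_getLast h]
  exact List.getLast_mem h

lemma iphi_phi : ∀ (δ : List Bool) (k : List ℕ), k.length = δ.length + 1 →
    iphi δ (phi δ k) = k := by
  intro δ
  induction δ with
  | nil =>
    intro k hk
    match k with
    | [k₁] => rfl
  | cons d δ' ih =>
    intro k hk
    match k with
    | k₁ :: k' =>
      have hk' : k'.length = δ'.length + 1 := by simpa using hk
      have hFne : phi δ' k' ≠ [] := phi_ne_nil δ' k' (by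
        intro h; rw [h] at hk'; simp at hk')
      obtain ⟨F₁, F₂, hF⟩ := List.exists_cons_of_ne_nil hFne
      have ihk := ih k' hk'
      cases d
      · -- d = false
        simp only [phi]
        split
        · -- k₁ = 0
          rename_i hk₁
          subst hk₁
          rw [hF]
          show iphi (false :: δ') (0 :: (F₁ :: F₂)) = 0 :: k'
          simp only [iphi, if_pos rfl]
          rw [← hF, ihk]
          simp
        · -- k₁ ≥ 1
          rename_i hk₁
          rw [hF]
          show iphi (false :: δ') ((F₁+1) :: (F₂.map (· + 1) ++ [k₁ + (F₁ :: F₂).getLastD 0]))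
            = k₁ :: k'
          simp only [iphi]
          rw [if_neg (by omega)]
          rw [show (F₁+1) :: (F₂.map (· + 1) ++ [k₁ + (F₁ :: F₂).getLastD 0]) =
            ((F₁ :: F₂).map (· + 1)) ++ [k₁ + (F₁ :: F₂).getLastD 0] from rfl]
          rw [List.getLastD_concat, List.dropLast_concat]
          rw [getLastD_map_add_one (by simp)]
          have hmm : ((F₁ :: F₂).map (· + 1)).map (· - 1) = F₁ :: F₂ := by
            rw [List.map_map]
            have h1 : ((· - 1) ∘ (· + 1) : ℕ → ℕ) = id := by
              funext z; simp
            rw [h1, List.map_id]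
          rw [hmm, ← hF, ihk]
          congr 1
          omega
      · -- d = true
        simp only [phi]
        rw [hF]
        show iphi (true :: δ') (F₁ :: (F₂ ++ [k₁ + (F₁ :: F₂).getLastD 0])) = k₁ :: k'
        simp only [iphi]
        rw [show F₁ :: (F₂ ++ [k₁ + (F₁ :: F₂).getLastD 0]) =
          (F₁ :: F₂) ++ [k₁ + (F₁ :: F₂).getLastD 0] from rfl]
        rw [List.getLastD_concat, List.dropLast_concat]
        rw [← hF, ihk]
        congr 1
        omega

lemma phi_iphi : ∀ (δ : List Bool) (f : List ℕ), f.length = δ.length + 1 →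
    Chain' (· ≤ ·) f → phi δ (iphi δ f) = f := by
  intro δ
  induction δ with
  | nil =>
    intro f hf _
    match f with
    | [f₁] => rfl
  | cons d δ' ih =>
    intro f hf hch
    match f with
    | f₁ :: f' =>
      have hf' : f'.length = δ'.length + 1 := by simpa using hf
      have hf'ne : f' ≠ [] := by intro h; rw [h] at hf'; simp at hf'
      have hne : (f₁ :: f') ≠ [] := by simp
      have hGne : (f₁ :: f').dropLast ≠ [] := by
        cases f' with
        | nil => exact absurd rfl hf'ne
        | cons a t => simp
      set G := (f₁ :: f').dropLast with hG
      set x := (f₁ :: f').getLast hne with hx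
      have hdec : G ++ [x] = f₁ :: f' := List.dropLast_append_getLast hne
      have hGlen : G.length = δ'.length + 1 := by
        rw [hG, List.length_dropLast]
        simpa using hf
      have hGchain : Chain' (· ≤ ·) G := hch.prefix (List.dropLast_prefix _)
      have hxlast : (f₁ :: f').getLastD 0 = x := by
        rw [← hdec, List.getLastD_concat]
      have hLx : G.getLastD 0 ≤ x := by
        apply sorted_dropLast_last G x
        rw [hdec]; exact hch
      have hheadG : G.headI = f₁ := by
        rw [hG]
        cases f' with
        | nil => exact absurd rfl hf'ne
        | cons a t => rfl
      cases d
      · -- d = false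
        simp only [iphi]
        rw [← hG]
        split
        · -- f₁ = 0
          rename_i hf₁
          subst hf₁
          simp only [phi, if_pos rfl]
          rw [ih f' hf' hch.tail]
          simp
        · -- f₁ ≠ 0
          rename_i hf₁
          rw [hxlast]
          have hG1 : ∀ y ∈ G, 1 ≤ y := by
            intro y hy
            have := chain_le_all G hGchain y hy
            rw [hheadG] at this
            omega
          have hL1 : 1 ≤ G.getLastD 0 := hG1 _ (getLastD_ne_nil_mem hGne)
          have hchainM : Chain' (· ≤ ·) (G.map (· - 1)) :=
            List.isChain_map_of_isChain _ (fun a b hab => by omega) hGchain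
          have hMlen : (G.map (· - 1)).length = δ'.length + 1 := by
            rw [List.length_map]; exact hGlen
          simp only [phi]
          rw [if_neg (by omega)]
          rw [ih _ hMlen hchainM]
          have hmm : (G.map (· - 1)).map (· + 1) = G := by
            rw [List.map_map]
            conv_rhs => rw [← List.map_id G]
            apply List.map_congr_left
            intro z hz
            have := hG1 z hz
            simp; omega
          rw [hmm]
          rw [getLastD_map_sub_one hGne]
          rw [show x + 1 - G.getLastD 0 + (G.getLastD 0 - 1) = x by omega]
          exact hdec
      · -- d = true
        simp only [iphi]
        rw [hxlast]
        simp only [phi]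
        rw [ih G hGlen hGchain]
        rw [show x - G.getLastD 0 + G.getLastD 0 = x by omega]
        exact hdec


lemma go_nil (prev q : ℕ) : go N prev q [] = [] := rfl

lemma go_shift {s : ℕ} (hs : 0 < s) (prev q : ℕ) (t : List ℕ) :
    go N prev q (s :: t) = go N 0 (q + inc prev s) (s :: t) := by
  show _ = (N * (q + inc prev s + inc 0 s) + s) :: go N s (q + inc prev s + inc 0 s) t
  have h0 : inc 0 s = 0 := by
    unfold inc
    rw [if_neg (by omega)]
  rw [h0]
  simp [go]

lemma go_zero_head {prev : ℕ} (hp : 0 < prev) (q : ℕ) (t : List ℕ) :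
    go N prev q (0 :: t) = (N * (q + 1)) :: go N 0 (q + 1) t := by
  show (N * (q + inc prev 0) + 0) :: go N 0 (q + inc prev 0) t = _
  have h1 : inc prev 0 = 1 := by
    unfold inc
    rw [if_pos (by omega)]
  rw [h1]
  norm_num

lemma go_zeros (q : ℕ) : ∀ (k : ℕ) (t : List ℕ),
    go N 0 q (List.replicate k 0 ++ t) = List.replicate k (N * q) ++ go N 0 q t := by
  intro k
  induction k with
  | zero => intro t; simp
  | succ j ih =>
    intro t
    rw [List.replicate_succ, List.cons_append]
    show (N * (q + inc 0 0) + 0) :: go N 0 (q + inc 0 0) (List.replicate j 0 ++ t) = _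
    have h0 : inc 0 0 = 0 := by unfold inc; rw [if_neg (by omega)]
    rw [h0, Nat.add_zero, Nat.add_zero, ih]
    rw [List.replicate_succ, List.cons_append]

lemma go_zeros_nil (q k : ℕ) : go N 0 q (List.replicate k 0) = List.replicate k (N * q) := by
  have := go_zeros (N := N) q k []
  simpa [go_nil] using this

lemma go_base_shift : ∀ (b : List ℕ) (c : ℕ), (∀ x ∈ b, 0 < x) →
    (go N 0 (c + 1) b).sum = (go N 0 c b).sum + N * b.length := by
  intro b
  induction b with
  | nil => intro c _; simp [go_nil]
  | cons b₁ b' ih =>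
    intro c hb
    have hb₁ : 0 < b₁ := hb b₁ (by simp)
    have h0 : inc 0 b₁ = 0 := by unfold inc; rw [if_neg (by omega)]
    show ((N * (c + 1 + inc 0 b₁) + b₁) :: go N b₁ (c + 1 + inc 0 b₁) b').sum =
      ((N * (c + inc 0 b₁) + b₁) :: go N b₁ (c + inc 0 b₁) b').sum + N * (b'.length + 1)
    rw [h0]
    simp only [List.sum_cons, Nat.add_zero]
    cases b' with
    | nil => simp [go_nil]; ring
    | cons b₂ b'' =>
      have hb₂ : 0 < b₂ := hb b₂ (by simp)
      rw [go_shift hb₂ b₁ (c+1), go_shift hb₂ b₁ c]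
      have ihh := ih (c + inc b₁ b₂) (fun x hx => hb x (by simp [hx]))
      rw [show c + 1 + inc b₁ b₂ = c + inc b₁ b₂ + 1 by ring, ihh]
      simp only [List.length_cons]
      ring

lemma go_toWord_sum (hN : 0 < N) : ∀ (b k : List ℕ) (c : ℕ), (∀ x ∈ b, 0 < x) →
    k.length = b.length →
    (go N 0 c (toWord b k)).sum = (go N 0 c b).sum +
      N * ((phi (delta b) k).sum + c * (phi (delta b) k).getLastD 0) := by
  intro b
  induction b with
  | nil =>
    intro k c _ hl
    match k with
    | [] => simp [toWord, go_nil, phi]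
  | cons b₁ b' ih =>
    intro k c hb hl
    match k with
    | k₁ :: k' =>
    have hb₁ : 0 < b₁ := hb b₁ (by simp)
    have h0 : inc 0 b₁ = 0 := by unfold inc; rw [if_neg (by omega)]
    have hl' : k'.length = b'.length := by simpa using hl
    cases b' with
    | nil =>
      -- single letter
      match k' with
      | [] =>
      show ((N * (c + inc 0 b₁) + b₁) :: go N b₁ (c + inc 0 b₁) (List.replicate k₁ 0 ++ toWord [] [])).sum = _
      rw [h0, Nat.add_zero]
      have htw : toWord [] ([] : List ℕ) = [] := rfl
      rw [htw]
      cases k₁ with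
      | zero =>
        show ((N * c + b₁) :: go N b₁ c (List.replicate 0 0 ++ [])).sum =
          (go N 0 c [b₁]).sum + N * ((phi (delta [b₁]) [0]).sum + c * (phi (delta [b₁]) [0]).getLastD 0)
        show ((N * c + b₁) :: go N b₁ c []).sum =
          (((N * (c + inc 0 b₁) + b₁) :: go N b₁ (c + inc 0 b₁) []).sum) + N * ((0 + 0) + c * ([0].getLastD 0))
        rw [h0]
        simp [go_nil]
      | succ j =>
        rw [List.replicate_succ, List.cons_append, List.append_nil]
        rw [go_zero_head hb₁, go_zeros_nil]
        have hrhs1 : (go N 0 c [b₁]).sum = N * c + b₁ := by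
          show ((N * (c + inc 0 b₁) + b₁) :: go N b₁ (c + inc 0 b₁) []).sum = _
          rw [h0]; simp [go_nil]
        have hrhs2 : phi (delta [b₁]) [j+1] = [j+1] := rfl
        rw [hrhs1, hrhs2]
        simp only [List.sum_cons, List.sum_replicate, smul_eq_mul, List.sum_nil,
          List.getLastD_cons, List.getLastD_nil]
        ring
    | cons b₂ b'' =>
      have hb₂ : 0 < b₂ := hb b₂ (by simp)
      have hk'ne : k' ≠ [] := by
        intro h; rw [h] at hl'; simp at hl'
      have hFne : phi (delta (b₂ :: b'')) k' ≠ [] := phi_ne_nil _ _ hk'ne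
      have hrest : ∃ w', toWord (b₂ :: b'') k' = b₂ :: w' := by
        match k', hk'ne with
        | k₂ :: k'', _ => exact ⟨_, rfl⟩
      obtain ⟨w', hw'⟩ := hrest
      have hdel : delta (b₁ :: b₂ :: b'') = decide (b₂ ≤ b₁) :: delta (b₂ :: b'') := rfl
      have hinc : inc b₁ b₂ = if b₂ ≤ b₁ then 1 else 0 := by
        unfold inc
        by_cases h : b₂ ≤ b₁
        · rw [if_pos ⟨Or.inl hb₁, h⟩, if_pos h]
        · rw [if_neg (by omega), if_neg h]
      have hbase : (go N 0 c (b₁ :: b₂ :: b'')).sum =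
          (N * c + b₁) + (go N 0 (c + inc b₁ b₂) (b₂ :: b'')).sum := by
        show ((N * (c + inc 0 b₁) + b₁) :: go N b₁ (c + inc 0 b₁) (b₂ :: b'')).sum = _
        rw [h0, Nat.add_zero, go_shift hb₂]
        simp [List.sum_cons]
      have hbpos' : ∀ x ∈ b₂ :: b'', 0 < x := fun x hx => hb x (by simp at hx ⊢; tauto)
      set F := phi (delta (b₂ :: b'')) k' with hF
      set L := F.getLastD 0 with hL
      -- expand LHS
      show ((N * (c + inc 0 b₁) + b₁) ::
        go N b₁ (c + inc 0 b₁) (List.replicate k₁ 0 ++ toWord (b₂ :: b'') k')).sum = _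
      rw [h0, Nat.add_zero]
      cases k₁ with
      | zero =>
        simp only [List.replicate, List.nil_append]
        rw [hw', go_shift hb₂, ← hw']
        rw [List.sum_cons]
        rw [ih k' (c + inc b₁ b₂) hbpos' hl']
        rw [hbase]
        -- now pure algebra on phi values
        rw [hdel]
        cases hd : decide (b₂ ≤ b₁) with
        | true =>
          have : phi (true :: delta (b₂ :: b'')) (0 :: k') = F ++ [0 + L] := rfl
          rw [this]
          have h1 : inc b₁ b₂ = 1 := by rw [hinc, if_pos (by simpa using hd)]
          rw [h1]
          rw [List.sum_append, List.getLastD_concat]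
          simp only [List.sum_cons, List.sum_nil]
          ring
        | false =>
          have : phi (false :: delta (b₂ :: b'')) (0 :: k') = 0 :: F := by
            simp [phi, ← hF]
          rw [this]
          have h1 : inc b₁ b₂ = 0 := by rw [hinc, if_neg (by simpa using hd)]
          rw [h1]
          obtain ⟨F₁, F₂, hFc⟩ := List.exists_cons_of_ne_nil hFne
          have hgl : (0 :: F).getLastD 0 = L := by
            rw [List.getLastD_cons]
          rw [hgl]
          simp only [List.sum_cons, Nat.add_zero, Nat.zero_add]
          ring
      | succ j =>
        rw [List.replicate_succ, List.cons_append]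
        rw [go_zero_head hb₁, go_zeros]
        rw [List.sum_cons, List.sum_cons, List.sum_append, List.sum_replicate, smul_eq_mul]
        rw [ih k' (c + 1) hbpos' hl']
        rw [hbase]
        rw [hdel]
        cases hd : decide (b₂ ≤ b₁) with
        | true =>
          have hphi : phi (true :: delta (b₂ :: b'')) ((j+1) :: k') = F ++ [(j+1) + L] := rfl
          rw [hphi]
          have h1 : inc b₁ b₂ = 1 := by rw [hinc, if_pos (by simpa using hd)]
          rw [h1]
          rw [List.sum_append, List.getLastD_concat]
          simp only [List.sum_cons, List.sum_nil]
          ring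
        | false =>
          have hphi : phi (false :: delta (b₂ :: b'')) ((j+1) :: k') =
              (F.map (· + 1)) ++ [(j+1) + L] := by
            show (if j + 1 = 0 then 0 :: phi (delta (b₂ :: b'')) k'
              else ((phi (delta (b₂ :: b'')) k').map (· + 1)) ++
                [(j+1) + (phi (delta (b₂ :: b'')) k').getLastD 0]) = _
            rw [if_neg (Nat.succ_ne_zero j)]
          rw [hphi]
          have h1 : inc b₁ b₂ = 0 := by rw [hinc, if_neg (by simpa using hd)]
          rw [h1, Nat.add_zero]
          rw [go_base_shift (b₂ :: b'') c hbpos']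
          rw [List.sum_append, List.getLastD_concat]
          have hmapsum : (F.map (· + 1)).sum = F.sum + F.length := by
            induction F with
            | nil => simp
            | cons a t iht => simp at iht ⊢; omega
          rw [hmapsum]
          have hFlen : F.length = b''.length + 1 := by
            rw [hF, phi_length]
            · rw [hl']; simp
            · rw [delta_length]
              simp only [List.length_cons]
              rw [hl']
              simp
          rw [hFlen]
          simp only [List.sum_cons, List.sum_nil, List.length_cons]
          rw [← hF, ← hL]
          ring


def mkMu (N : ℕ) : ℕ → ℕ → List ℕ → List ℕ → List ℕ
  | _, _, [], _ => []
  | _, _, _ :: _, [] => []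
  | prev, c, b₁ :: b', f₁ :: f' =>
    (N * ((if b₁ ≤ prev then c + 1 else c) + f₁) + b₁) ::
      mkMu N b₁ (if b₁ ≤ prev then c + 1 else c) b' f'

def recF (N : ℕ) : ℕ → ℕ → List ℕ → List ℕ
  | _, _, [] => []
  | prev, c, x :: t =>
    (x / N - (if x % N ≤ prev then c + 1 else c)) ::
      recF N (x % N) (if x % N ≤ prev then c + 1 else c) t

lemma mkMu_sum : ∀ (b f : List ℕ) (prev c : ℕ), (∀ x ∈ b, 0 < x) → f.length = b.length →
    (mkMu N prev c b f).sum = (go N prev c b).sum + N * f.sum := by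
  intro b
  induction b with
  | nil =>
    intro f prev c _ hl
    match f with
    | [] => simp [mkMu, go_nil]
  | cons b₁ b' ih =>
    intro f prev c hb hl
    match f with
    | f₁ :: f' =>
      have hb₁ : 0 < b₁ := hb b₁ (by simp)
      have hinc : inc prev b₁ = if b₁ ≤ prev then 1 else 0 := by
        unfold inc
        by_cases h : b₁ ≤ prev
        · rw [if_pos ⟨Or.inr hb₁, h⟩, if_pos h]
        · rw [if_neg (by omega), if_neg h]
      show ((N * ((if b₁ ≤ prev then c + 1 else c) + f₁) + b₁) ::
          mkMu N b₁ (if b₁ ≤ prev then c + 1 else c) b' f').sum =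
        ((N * (c + inc prev b₁) + b₁) :: go N b₁ (c + inc prev b₁) b').sum + N * (f₁ :: f').sum
      have hcif : c + inc prev b₁ = if b₁ ≤ prev then c + 1 else c := by
        rw [hinc]; split <;> omega
      rw [hcif]
      simp only [List.sum_cons]
      rw [ih f' b₁ _ (fun x hx => hb x (by simp [hx])) (by simpa using hl)]
      ring

lemma mkMu_map_mod (hN : 0 < N) : ∀ (b f : List ℕ) (prev c : ℕ), (∀ x ∈ b, x < N) →
    f.length = b.length → (mkMu N prev c b f).map (· % N) = b := by
  intro b
  induction b with
  | nil =>
    intro f prev c _ hl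
    match f with
    | [] => simp [mkMu]
  | cons b₁ b' ih =>
    intro f prev c hb hl
    match f with
    | f₁ :: f' =>
      simp only [mkMu, List.map_cons]
      rw [Nat.mul_add_mod, Nat.mod_eq_of_lt (hb b₁ (by simp))]
      rw [ih f' b₁ _ (fun x hx => hb x (by simp [hx])) (by simpa using hl)]

lemma mkMu_chain (hN : 0 < N) : ∀ (b f : List ℕ) (prev c f₀ : ℕ),
    (∀ x ∈ b, 0 < x ∧ x < N) → prev < N → Chain' (· ≤ ·) (f₀ :: f) → f.length = b.length →
    Chain' (· < ·) ((N * (c + f₀) + prev) :: mkMu N prev c b f) := by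
  intro b
  induction b with
  | nil =>
    intro f prev c f₀ _ _ _ hl
    match f with
    | [] => simp [mkMu, List.Chain']
  | cons b₁ b' ih =>
    intro f prev c f₀ hb hp hch hl
    match f with
    | f₁ :: f' =>
      obtain ⟨hb₁, hb₁N⟩ := hb b₁ (by simp)
      have hf₀₁ : f₀ ≤ f₁ := (List.isChain_cons_cons.mp hch).1
      simp only [mkMu]
      apply List.IsChain.cons_cons
      · -- strict increase
        have hmul : N * (c + f₀) ≤ N * (c + f₁) := Nat.mul_le_mul_left N (by omega)
        split
        · have : N * (c + 1 + f₁) = N * (c + f₁) + N := by ring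
          omega
        · rename_i hle
          omega
      · exact ih f' b₁ _ f₁ (fun x hx => hb x (by simp [hx])) hb₁N hch.tail
          (by simpa using hl)

lemma recF_mkMu (hN : 0 < N) : ∀ (b f : List ℕ) (prev c : ℕ),
    (∀ x ∈ b, 0 < x ∧ x < N) → f.length = b.length →
    recF N prev c (mkMu N prev c b f) = f := by
  intro b
  induction b with
  | nil =>
    intro f prev c _ hl
    match f with
    | [] => simp [mkMu, recF]
  | cons b₁ b' ih =>
    intro f prev c hb hl
    match f with
    | f₁ :: f' =>
      obtain ⟨hb₁, hb₁N⟩ := hb b₁ (by simp)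
      simp only [mkMu, recF]
      have hmod : (N * ((if b₁ ≤ prev then c + 1 else c) + f₁) + b₁) % N = b₁ := by
        rw [Nat.mul_add_mod, Nat.mod_eq_of_lt hb₁N]
      have hdiv : (N * ((if b₁ ≤ prev then c + 1 else c) + f₁) + b₁) / N =
          (if b₁ ≤ prev then c + 1 else c) + f₁ := by
        rw [Nat.mul_add_div hN, Nat.div_eq_of_lt hb₁N, Nat.add_zero]
      rw [hmod, hdiv]
      congr 1
      · omega
      · exact ih f' b₁ _ (fun x hx => hb x (by simp [hx])) (by simpa using hl)

lemma div_ge_next (hN : 0 < N) {x₀ x prev c : ℕ} (hmod : x₀ % N = prev)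
    (hdiv : c ≤ x₀ / N) (hlt : x₀ < x) :
    (if x % N ≤ prev then c + 1 else c) ≤ x / N := by
  have hx₀ : N * (x₀ / N) + x₀ % N = x₀ := Nat.div_add_mod x₀ N
  have hx : N * (x / N) + x % N = x := Nat.div_add_mod x N
  have hm : x % N < N := Nat.mod_lt _ hN
  have hm₀ : x₀ % N < N := Nat.mod_lt _ hN
  have hqq : x₀ / N ≤ x / N := by
    by_contra hcon
    push_neg at hcon
    have h1 : x / N + 1 ≤ x₀ / N := by omega
    have h2 : N * (x / N + 1) ≤ N * (x₀ / N) := Nat.mul_le_mul_left N h1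
    have h3 : N * (x / N + 1) = N * (x / N) + N := by ring
    omega
  split
  · rename_i hle
    -- x % N ≤ prev = x₀ % N, and x₀ < x forces x₀ / N < x / N
    have : x₀ / N < x / N := by
      by_contra hcon
      push_neg at hcon
      have heq : x₀ / N = x / N := le_antisymm hqq hcon
      have heq2 : N * (x₀ / N) = N * (x / N) := by rw [heq]
      omega
    omega
  · omega

lemma recF_chain (hN : 0 < N) : ∀ (ℓ : List ℕ) (x₀ prev c : ℕ),
    Chain' (· < ·) (x₀ :: ℓ) → x₀ % N = prev → c ≤ x₀ / N →
    Chain' (· ≤ ·) ((x₀ / N - c) :: recF N prev c ℓ) := by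
  intro ℓ
  induction ℓ with
  | nil => intro x₀ prev c _ _ _; simp [recF, List.Chain']
  | cons x t ih =>
    intro x₀ prev c hch hmod hdiv
    have hlt : x₀ < x := (List.isChain_cons_cons.mp hch).1
    have hc' : (if x % N ≤ prev then c + 1 else c) ≤ x / N := div_ge_next hN hmod hdiv hlt
    simp only [recF]
    apply List.IsChain.cons_cons
    · -- x₀ / N - c ≤ x / N - c'
      have hx₀ : N * (x₀ / N) + x₀ % N = x₀ := Nat.div_add_mod x₀ N
      have hx : N * (x / N) + x % N = x := Nat.div_add_mod x N
      have hm : x % N < N := Nat.mod_lt _ hN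
      have hqq : x₀ / N ≤ x / N := by
        by_contra hcon
        push_neg at hcon
        have h1 : x / N + 1 ≤ x₀ / N := by omega
        have h2 : N * (x / N + 1) ≤ N * (x₀ / N) := Nat.mul_le_mul_left N h1
        have h3 : N * (x / N + 1) = N * (x / N) + N := by ring
        omega
      split
      · rename_i hle
        have : x₀ / N < x / N := by
          by_contra hcon
          push_neg at hcon
          have heq : x₀ / N = x / N := le_antisymm hqq hcon
          have heq2 : N * (x₀ / N) = N * (x / N) := by rw [heq]
          omega
        omega
      · omega
    · exact ih x (x % N) _ hch.tail rfl hc'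

lemma mkMu_recF (hN : 0 < N) : ∀ (ℓ : List ℕ) (x₀ prev c : ℕ),
    Chain' (· < ·) (x₀ :: ℓ) → x₀ % N = prev → c ≤ x₀ / N →
    mkMu N prev c (ℓ.map (· % N)) (recF N prev c ℓ) = ℓ := by
  intro ℓ
  induction ℓ with
  | nil => intro _ _ _ _ _ _; rfl
  | cons x t ih =>
    intro x₀ prev c hch hmod hdiv
    have hlt : x₀ < x := (List.isChain_cons_cons.mp hch).1
    have hc' : (if x % N ≤ prev then c + 1 else c) ≤ x / N := div_ge_next hN hmod hdiv hlt
    simp only [recF, List.map_cons, mkMu]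
    have hhead : N * ((if x % N ≤ prev then c + 1 else c) +
        (x / N - (if x % N ≤ prev then c + 1 else c))) + x % N = x := by
      rw [show (if x % N ≤ prev then c + 1 else c) +
        (x / N - (if x % N ≤ prev then c + 1 else c)) = x / N from by omega]
      exact Nat.div_add_mod x N
    rw [hhead, ih x (x % N) _ hch.tail rfl hc']


def rel3 (N x y : ℕ) : Prop := y ≤ x + N ∧ ((N ∣ y ∨ N ∣ x) → y < x + N)
def relEq (N x y : ℕ) : Prop := x = y → N ∣ x

lemma chain'_and {P Q : ℕ → ℕ → Prop} : ∀ (l : List ℕ), Chain' P l → Chain' Q l →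
    Chain' (fun a b => P a b ∧ Q a b) l := by
  intro l
  induction l with
  | nil => intro _ _; simp [List.Chain']
  | cons x t ih =>
    intro hp hq
    cases t with
    | nil => simp [List.Chain']
    | cons y t' =>
      simp only [List.Chain', List.isChain_cons_cons] at hp hq ⊢
      exact ⟨⟨hp.1, hq.1⟩, ih hp.2 hq.2⟩

lemma count_chain_iff : ∀ l : List ℕ, List.Pairwise (· ≤ ·) l →
    ((∀ i, 1 < l.count i → N ∣ i) ↔ Chain' (relEq N) l) := by
  intro l
  induction l with
  | nil => intro _; simp [List.Chain']
  | cons x t ih =>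
    intro hs
    have hst : List.Pairwise (· ≤ ·) t := hs.of_cons
    simp only [List.Chain', List.isChain_cons]
    constructor
    · intro h
      constructor
      · intro y hy hxy
        cases t with
        | nil => simp at hy
        | cons z t' =>
          simp only [List.head?_cons, Option.mem_def, Option.some.injEq] at hy
          subst hy
          subst hxy
          apply h x
          have : (x :: x :: t').count x = t'.count x + 2 := by
            simp [List.count_cons]
          omega
      · change Chain' (relEq N) t
        rw [← ih hst]
        intro i hi
        apply h i
        rw [List.count_cons]
        omega
    · rintro ⟨hhead, hch⟩ i hcount
      by_cases hix : i = x
      · subst hix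
        have hmem : i ∈ t := by
          rw [List.count_cons] at hcount
          simp only [beq_self_eq_true, if_pos] at hcount
          have : 0 < t.count i := by omega
          exact List.count_pos_iff.mp this
        cases t with
        | nil => simp at hmem
        | cons y t' =>
          have hxy : i ≤ y := List.rel_of_pairwise_cons hs (by simp)
          have hyx : y ≤ i := by
            rcases List.mem_cons.mp hmem with rfl | hmem'
            · exact le_refl _
            · exact le_trans (List.rel_of_pairwise_cons hst hmem') (le_refl _)
          have : i = y := le_antisymm hxy hyx
          exact hhead y (by simp) this
      · apply (ih hst).mpr hch i
        rw [List.count_cons] at hcount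
        have hxi : (x == i) = false := beq_eq_false_iff_ne.mpr (fun h => hix h.symm)
        rw [hxi] at hcount
        simpa using hcount

lemma getD_reverse_last : ∀ (l : List ℕ), l.reverse.getD (l.reverse.length - 1) 0 = l.headI := by
  intro l
  cases l with
  | nil => rfl
  | cons x t =>
    rw [List.reverse_cons]
    rw [List.getD_append_right _ _ _ _ (by simp)]
    simp

lemma getD_cond_iff (R : List ℕ) (S : ℕ → ℕ → Prop) :
    (∀ j, j + 1 < R.length → S (R.getD j 0) (R.getD (j+1) 0)) ↔ Chain' S R := by
  simp only [List.Chain']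
  rw [List.isChain_iff_getElem]
  constructor
  · intro h i hi
    have := h i (by omega)
    rwa [List.getD_eq_getElem _ _ (by omega), List.getD_eq_getElem _ _ (by omega)] at this
  · intro h j hj
    rw [List.getD_eq_getElem _ _ (by omega), List.getD_eq_getElem _ _ (by omega)]
    exact h j (by omega)

lemma chainrel_iff (hN : 0 < N) (ℓ : List ℕ) (hsor : List.Pairwise (· ≤ ·) ℓ) :
    Chain' (rel N) (0 :: ℓ) ↔ (Chain' (rel3 N) ℓ ∧ Chain' (relEq N) ℓ ∧ ℓ.headI < N) := by
  simp only [List.Chain', List.isChain_cons]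
  constructor
  · rintro ⟨hhead, hch⟩
    refine ⟨hch.imp ?_, hch.imp ?_, ?_⟩
    · rintro a b ⟨h1, h2, h3, h4⟩
      exact ⟨h2, fun hor => h3 hor.symm⟩
    · rintro a b ⟨h1, h2, h3, h4⟩
      exact h4
    · cases ℓ with
      | nil => simpa using hN
      | cons x t =>
        have := hhead x (by simp)
        have h3 := this.2.2.1 (Or.inl (dvd_zero N))
        simpa using h3
  · rintro ⟨h3c, heqc, hhI⟩
    constructor
    · intro h hh
      cases ℓ with
      | nil => simp at hh
      | cons x t =>
        simp only [List.head?_cons, Option.mem_def, Option.some.injEq] at hh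
        subst hh
        simp only [List.headI] at hhI
        exact ⟨Nat.zero_le _, by omega, fun _ => by omega, fun _ => dvd_zero N⟩
    · have hle : Chain' (· ≤ ·) ℓ := hsor.isChain
      have := chain'_and ℓ hle (chain'_and ℓ h3c heqc)
      apply this.imp
      rintro a b ⟨hab, ⟨h31, h32⟩, heq⟩
      exact ⟨hab, h31, fun hor => h32 hor.symm, heq⟩

lemma nodup_iff_chain_lt (ℓ : List ℕ) (hsor : List.Pairwise (· ≤ ·) ℓ) :
    ℓ.Nodup ↔ Chain' (· < ·) ℓ := by
  constructor
  · intro hnd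
    have h1 : List.Pairwise (fun a b : ℕ => a ≤ b ∧ a ≠ b) ℓ := hsor.and hnd
    exact (h1.imp (fun h => lt_of_le_of_ne h.1 h.2)).isChain
  · intro hch
    have : List.Pairwise (· < ·) ℓ := List.isChain_iff_pairwise.mp hch
    exact this.imp _root_.ne_of_lt

lemma msort_coe {ℓ : List ℕ} (h : List.Pairwise (· ≤ ·) ℓ) :
    Multiset.sort (↑ℓ : Multiset ℕ) (· ≤ ·) = ℓ := by
  apply List.Perm.eq_of_pairwise' (Multiset.pairwise_sort _ _) h
  exact Multiset.coe_eq_coe.mp (Multiset.sort_eq _ _)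

def sortedListEquiv (n : ℕ) (Q : List ℕ → Prop) :
    {p : n.Partition // Q (Multiset.sort p.parts (· ≤ ·))} ≃
    {ℓ : List ℕ // ((∀ i ∈ ℓ, 0 < i) ∧ ℓ.sum = n ∧ List.Pairwise (· ≤ ·) ℓ) ∧ Q ℓ} where
  toFun := fun ⟨p, hp⟩ => ⟨Multiset.sort p.parts (· ≤ ·),
    ⟨⟨fun i hi => p.parts_pos ((Multiset.mem_sort _).mp hi),
      by rw [← Multiset.sum_coe, Multiset.sort_eq]; exact p.parts_sum,
      Multiset.pairwise_sort _ _⟩, hp⟩⟩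
  invFun := fun ⟨ℓ, ⟨⟨hpos, hsum, hsort⟩, hQ⟩⟩ =>
    ⟨⟨(↑ℓ : Multiset ℕ), fun {i} hi => hpos i (by simpa using hi), by simpa using hsum⟩, by
      rwa [msort_coe hsort]⟩
  left_inv := fun ⟨p, hp⟩ => by
    apply Subtype.ext
    apply Nat.Partition.ext
    simp [Multiset.sort_eq]
  right_inv := fun ⟨ℓ, ⟨⟨hpos, hsum, hsort⟩, hQ⟩⟩ => by
    apply Subtype.ext
    simp only []
    exact msort_coe hsort


lemma iphi_length : ∀ (δ : List Bool) (f : List ℕ), f.length = δ.length + 1 →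
    (iphi δ f).length = f.length := by
  intro δ
  induction δ with
  | nil =>
    intro f hf
    match f with
    | [f₁] => rfl
  | cons d δ' ih =>
    intro f hf
    match f with
    | f₁ :: f' =>
      have hf' : f'.length = δ'.length + 1 := by simpa using hf
      have hdl : (f₁ :: f').dropLast.length = δ'.length + 1 := by
        rw [List.length_dropLast]; simpa using hf
      cases d
      · simp only [iphi]
        split
        · simp [ih f' hf']
        · simp only [List.length_cons]
          rw [ih _ (by simpa using hdl)]
          simp only [List.length_map]
          rw [hdl, hf']
      · simp only [iphi, List.length_cons]
        rw [ih _ hdl, hdl, hf']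

lemma recF_length : ∀ (ℓ : List ℕ) (prev c : ℕ), (recF N prev c ℓ).length = ℓ.length := by
  intro ℓ
  induction ℓ with
  | nil => intro _ _; rfl
  | cons x t ih =>
    intro prev c
    simp only [recF, List.length_cons]
    rw [ih]

section Equivs

variable (N : ℕ) (A : Finset ℕ) (n : ℕ)

def TC := {ℓ : List ℕ //
  ((∀ i ∈ ℓ, 0 < i) ∧ ℓ.sum = n ∧ List.Pairwise (· ≤ ·) ℓ) ∧
  ((∀ i ∈ ℓ, i % N = 0 ∨ i % N ∈ A) ∧ Chain' (rel N) (0 :: ℓ))}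

def TW := {w : List ℕ //
  (∀ x ∈ w, x = 0 ∨ x ∈ A) ∧ w.head? ≠ some 0 ∧ (go N 0 0 w).sum = n}

def TK := {bk : List ℕ × List ℕ //
  (∀ x ∈ bk.1, x ∈ A) ∧ bk.2.length = bk.1.length ∧ (go N 0 0 (toWord bk.1 bk.2)).sum = n}

def TF := {bf : List ℕ × List ℕ //
  (∀ x ∈ bf.1, x ∈ A) ∧ bf.2.length = bf.1.length ∧ Chain' (· ≤ ·) bf.2 ∧
    (go N 0 0 bf.1).sum + N * bf.2.sum = n}

def TB := {ℓ : List ℕ //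
  ((∀ i ∈ ℓ, 0 < i) ∧ ℓ.sum = n ∧ List.Pairwise (· ≤ ·) ℓ) ∧
  (Chain' (· < ·) ℓ ∧ ∀ i ∈ ℓ, i % N ∈ A)}

variable {N A n}
variable (hN : 0 < N) (hA : A ⊆ Finset.Ico 1 N)

lemma memA_lt (hA : A ⊆ Finset.Ico 1 N) {x : ℕ} (hx : x ∈ A) : 0 < x ∧ x < N := by
  have := hA hx
  rw [Finset.mem_Ico] at this
  omega

def equivCW : TC N A n ≃ TW N A n where
  toFun := fun ⟨ℓ, ⟨hpos, hsum, hsor⟩, hres, hch⟩ => ⟨ℓ.map (· % N), by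
    refine ⟨?_, ?_, ?_⟩
    · intro x hx
      obtain ⟨i, hi, rfl⟩ := List.mem_map.mp hx
      exact hres i hi
    · cases ℓ with
      | nil => simp
      | cons x t =>
        have hrel : rel N 0 x := (List.isChain_cons.mp hch).1 x (by simp)
        have hxN : x < N := by
          have := hrel.2.2.1 (Or.inl (dvd_zero N))
          omega
        have hx0 : 0 < x := hpos x (by simp)
        simp only [List.map_cons, List.head?_cons, ne_eq, Option.some.injEq]
        rw [Nat.mod_eq_of_lt hxN]
        omega
    · have hrec := go_recon hN ℓ 0 hch
      rw [Nat.zero_mod, Nat.zero_div] at hrec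
      rw [hrec]
      exact hsum⟩
  invFun := fun ⟨w, hlet, hhead, hsum⟩ => ⟨go N 0 0 w, by
    have hwlt : ∀ x ∈ w, x < N := by
      intro x hx
      rcases hlet x hx with rfl | hxA
      · exact hN
      · exact (memA_lt hA hxA).2
    have hch0 : Chain' (rel N) (0 :: go N 0 0 w) := by
      have := go_chain hN w 0 0 hwlt hN
      simpa using this
    have hmap := go_map_mod hN w 0 0 hwlt
    refine ⟨⟨?_, hsum, ?_⟩, ?_, hch0⟩
    · intro i hi
      cases w with
      | nil => simp [go_nil] at hi
      | cons s t =>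
        have hs0 : s ≠ 0 := by simpa using hhead
        have hsl : 0 < s := by omega
        rw [go_zero_cons hsl] at hi
        rcases List.mem_cons.mp hi with rfl | hi'
        · exact hsl
        · exact go_pos hN t s 0 (by omega) i hi'
    · have hle : Chain' (· ≤ ·) (go N 0 0 w) := (hch0.tail).imp (fun a b h => h.1)
      exact List.isChain_iff_pairwise.mp hle
    · intro i hi
      have : i % N ∈ w := by
        rw [← hmap]
        exact List.mem_map.mpr ⟨i, hi, rfl⟩
      exact hlet _ this⟩
  left_inv := fun ⟨ℓ, ⟨hpos, hsum, hsor⟩, hres, hch⟩ => by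
    apply Subtype.ext
    have hrec := go_recon hN ℓ 0 hch
    rw [Nat.zero_mod, Nat.zero_div] at hrec
    exact hrec
  right_inv := fun ⟨w, hlet, hhead, hsum⟩ => by
    apply Subtype.ext
    apply go_map_mod hN w 0 0
    intro x hx
    rcases hlet x hx with rfl | hxA
    · exact hN
    · exact (memA_lt hA hxA).2

def equivWK : TW N A n ≃ TK N A n where
  toFun := fun ⟨w, hlet, hhead, hsum⟩ => ⟨(getB w, getK w), by
    refine ⟨?_, ?_, ?_⟩
    · intro x hx
      obtain ⟨hxw, hx0⟩ := getB_mem hx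
      rcases hlet x hxw with rfl | h
      · exact absurd rfl hx0
      · exact h
    · exact getK_length w.length w (le_refl _) hhead
    · rw [toWord_recon w hhead]
      exact hsum⟩
  invFun := fun ⟨⟨b, k⟩, hbA, hlen, hsum⟩ => ⟨toWord b k, by
    have hbne : ∀ x ∈ b, x ≠ 0 := fun x hx => by
      have := (memA_lt hA (hbA x hx)).1; omega
    refine ⟨?_, toWord_head? b k hbne, hsum⟩
    · intro x hx
      rcases toWord_mem b k x hx with rfl | hxb
      · exact Or.inl rfl
      · exact Or.inr (hbA x hxb)⟩
  left_inv := fun ⟨w, hlet, hhead, hsum⟩ => by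
    apply Subtype.ext
    exact toWord_recon w hhead
  right_inv := fun ⟨⟨b, k⟩, hbA, hlen, hsum⟩ => by
    apply Subtype.ext
    have hbne : ∀ x ∈ b, x ≠ 0 := fun x hx => by
      have := (memA_lt hA (hbA x hx)).1; omega
    have h1 := getB_toWord b k hbne hlen.symm
    have h2 := getK_toWord b k hbne hlen.symm
    simp only []
    rw [h1, h2]

lemma len_delta {b k : List ℕ} (hb : b ≠ []) (hlen : k.length = b.length) :
    k.length = (delta b).length + 1 := by
  rw [delta_length, hlen]
  cases b with
  | nil => exact absurd rfl hb
  | cons x t => simp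

def equivKF : TK N A n ≃ TF N A n where
  toFun := fun ⟨⟨b, k⟩, hbA, hlen, hsum⟩ => ⟨(b, phi (delta b) k), by
    have hbpos : ∀ x ∈ b, 0 < x := fun x hx => (memA_lt hA (hbA x hx)).1
    refine ⟨hbA, ?_, phi_chain _ _, ?_⟩
    · show (phi (delta b) k).length = b.length
      cases b with
      | nil =>
        match k, hlen with
        | [], _ => rfl
      | cons b₁ b' =>
        rw [phi_length _ _ (len_delta (by simp) hlen)]
        exact hlen
    · show (go N 0 0 b).sum + N * (phi (delta b) k).sum = n
      have := go_toWord_sum hN b k 0 hbpos hlen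
      rw [Nat.zero_mul, Nat.add_zero] at this
      rw [← this]
      exact hsum⟩
  invFun := fun ⟨⟨b, f⟩, hbA, hlen, hchain, hsum⟩ => ⟨(b, iphi (delta b) f), by
    have hbpos : ∀ x ∈ b, 0 < x := fun x hx => (memA_lt hA (hbA x hx)).1
    refine ⟨hbA, ?_, ?_⟩
    · show (iphi (delta b) f).length = b.length
      cases b with
      | nil =>
        match f, hlen with
        | [], _ => rfl
      | cons b₁ b' =>
        rw [iphi_length _ _ (len_delta (by simp) hlen)]
        exact hlen
    · show (go N 0 0 (toWord b (iphi (delta b) f))).sum = n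
      cases b with
      | nil =>
        match f, hlen with
        | [], _ =>
          simp only [toWord, go_nil, List.sum_nil]
          simpa [go_nil] using hsum
      | cons b₁ b' =>
        have hilen : (iphi (delta (b₁ :: b')) f).length = (b₁ :: b').length := by
          rw [iphi_length _ _ (len_delta (by simp) hlen)]; exact hlen
        have := go_toWord_sum hN (b₁ :: b') (iphi (delta (b₁ :: b')) f) 0 hbpos hilen
        rw [Nat.zero_mul, Nat.add_zero] at this
        rw [this]
        rw [phi_iphi _ _ (len_delta (by simp) hlen) hchain]
        exact hsum⟩
  left_inv := fun ⟨⟨b, k⟩, hbA, hlen, hsum⟩ => by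
    apply Subtype.ext
    simp only []
    cases b with
    | nil =>
      match k, hlen with
      | [], _ => rfl
    | cons b₁ b' =>
      rw [iphi_phi _ _ (len_delta (by simp) hlen)]
  right_inv := fun ⟨⟨b, f⟩, hbA, hlen, hchain, hsum⟩ => by
    apply Subtype.ext
    simp only []
    cases b with
    | nil =>
      match f, hlen with
      | [], _ => rfl
    | cons b₁ b' =>
      rw [phi_iphi _ _ (len_delta (by simp) hlen) hchain]

def equivFB : TF N A n ≃ TB N A n where
  toFun := fun ⟨⟨b, f⟩, hbA, hlen, hch, hsum⟩ => ⟨mkMu N 0 0 b f, by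
    have hbr : ∀ x ∈ b, 0 < x ∧ x < N := fun x hx => memA_lt hA (hbA x hx)
    have hch0 : Chain' (· < ·) (0 :: mkMu N 0 0 b f) := by
      have := mkMu_chain hN b f 0 0 0 hbr hN
        (List.isChain_cons.mpr ⟨fun y _ => Nat.zero_le y, hch⟩) hlen
      simpa using this
    have hmap := mkMu_map_mod hN b f 0 0 (fun x hx => (hbr x hx).2) hlen
    refine ⟨⟨?_, ?_, ?_⟩, hch0.tail, ?_⟩
    · intro i hi
      exact List.rel_of_pairwise_cons (List.isChain_iff_pairwise.mp hch0) hi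
    · rw [mkMu_sum b f 0 0 (fun x hx => (hbr x hx).1) hlen]
      exact hsum
    · exact List.isChain_iff_pairwise.mp (hch0.tail.imp (fun a b h => le_of_lt h))
    · intro i hi
      apply hbA
      rw [← hmap]
      exact List.mem_map.mpr ⟨i, hi, rfl⟩⟩
  invFun := fun ⟨ℓ, ⟨hpos, hsum, hsor⟩, hlt, hres⟩ => ⟨(ℓ.map (· % N), recF N 0 0 ℓ), by
    have hch0 : Chain' (· < ·) (0 :: ℓ) :=
      List.isChain_cons.mpr ⟨fun y hy => hpos y (List.mem_of_mem_head? hy), hlt⟩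
    have hbpos : ∀ x ∈ ℓ.map (· % N), 0 < x := by
      intro x hx
      obtain ⟨i, hi, rfl⟩ := List.mem_map.mp hx
      exact (memA_lt hA (hres i hi)).1
    refine ⟨?_, ?_, ?_, ?_⟩
    · intro x hx
      obtain ⟨i, hi, rfl⟩ := List.mem_map.mp hx
      exact hres i hi
    · show (recF N 0 0 ℓ).length = (ℓ.map (· % N)).length
      rw [recF_length, List.length_map]
    · have := recF_chain hN ℓ 0 0 0 hch0 (Nat.zero_mod N) (by simp)
      exact this.tail
    · show (go N 0 0 (ℓ.map (· % N))).sum + N * (recF N 0 0 ℓ).sum = n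
      have hrecon := mkMu_recF hN ℓ 0 0 0 hch0 (Nat.zero_mod N) (by simp)
      have hlen2 : (recF N 0 0 ℓ).length = (ℓ.map (· % N)).length := by
        rw [recF_length, List.length_map]
      rw [← mkMu_sum _ _ 0 0 hbpos hlen2, hrecon]
      exact hsum⟩
  left_inv := fun ⟨⟨b, f⟩, hbA, hlen, hch, hsum⟩ => by
    apply Subtype.ext
    have hbr : ∀ x ∈ b, 0 < x ∧ x < N := fun x hx => memA_lt hA (hbA x hx)
    have h1 := mkMu_map_mod hN b f 0 0 (fun x hx => (hbr x hx).2) hlen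
    have h2 := recF_mkMu hN b f 0 0 hbr hlen
    simp only []
    rw [h1, h2]
  right_inv := fun ⟨ℓ, ⟨hpos, hsum, hsor⟩, hlt, hres⟩ => by
    apply Subtype.ext
    have hch0 : Chain' (· < ·) (0 :: ℓ) :=
      List.isChain_cons.mpr ⟨fun y hy => hpos y (List.mem_of_mem_head? hy), hlt⟩
    exact mkMu_recF hN ℓ 0 0 0 hch0 (Nat.zero_mod N) (by simp)

end Equivs


variable {A : Finset ℕ}

lemma T1 (hN : 0 < N) {n : ℕ} (p : n.Partition) :
    ((∀ i ∈ p.parts, i % N = 0 ∨ i % N ∈ A) ∧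
     (∀ i, 1 < p.parts.count i → N ∣ i) ∧
     (∀ j, j + 1 < ((Multiset.sort p.parts (· ≤ ·)).reverse).length →
       ((Multiset.sort p.parts (· ≤ ·)).reverse).getD j 0 ≤
         ((Multiset.sort p.parts (· ≤ ·)).reverse).getD (j + 1) 0 + N ∧
       ((N ∣ ((Multiset.sort p.parts (· ≤ ·)).reverse).getD j 0 ∨
         N ∣ ((Multiset.sort p.parts (· ≤ ·)).reverse).getD (j + 1) 0) →
         ((Multiset.sort p.parts (· ≤ ·)).reverse).getD j 0 <
           ((Multiset.sort p.parts (· ≤ ·)).reverse).getD (j + 1) 0 + N)) ∧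
     ((Multiset.sort p.parts (· ≤ ·)).reverse).getD
       (((Multiset.sort p.parts (· ≤ ·)).reverse).length - 1) 0 < N) ↔
    ((∀ i ∈ Multiset.sort p.parts (· ≤ ·), i % N = 0 ∨ i % N ∈ A) ∧
      Chain' (rel N) (0 :: Multiset.sort p.parts (· ≤ ·))) := by
  set ℓ := Multiset.sort p.parts (· ≤ ·) with hℓ
  have hsor : List.Pairwise (· ≤ ·) ℓ := Multiset.pairwise_sort _ _
  have hcoe : (↑ℓ : Multiset ℕ) = p.parts := Multiset.sort_eq _ _
  have hcount : ∀ i, p.parts.count i = ℓ.count i := fun i => by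
    rw [← hcoe]; simp
  have h3iff : (∀ j, j + 1 < ℓ.reverse.length →
      ℓ.reverse.getD j 0 ≤ ℓ.reverse.getD (j + 1) 0 + N ∧
      ((N ∣ ℓ.reverse.getD j 0 ∨ N ∣ ℓ.reverse.getD (j + 1) 0) →
        ℓ.reverse.getD j 0 < ℓ.reverse.getD (j + 1) 0 + N)) ↔ Chain' (rel3 N) ℓ := by
    rw [getD_cond_iff ℓ.reverse (fun a b => a ≤ b + N ∧ ((N ∣ a ∨ N ∣ b) → a < b + N))]
    simp only [List.Chain', List.isChain_reverse]
    exact ⟨fun h => h.imp (fun a b hab => hab), fun h => h.imp (fun a b hab => hab)⟩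
  have h4iff : ℓ.reverse.getD (ℓ.reverse.length - 1) 0 < N ↔ ℓ.headI < N := by
    rw [getD_reverse_last]
  constructor
  · rintro ⟨h1, h2, h3, h4⟩
    refine ⟨fun i hi => h1 i ((Multiset.mem_sort _).mp hi), ?_⟩
    rw [chainrel_iff hN ℓ hsor]
    refine ⟨h3iff.mp h3, ?_, h4iff.mp h4⟩
    rw [← count_chain_iff ℓ hsor]
    intro i hic
    exact h2 i (by rw [hcount]; exact hic)
  · rintro ⟨h1, h2⟩
    rw [chainrel_iff hN ℓ hsor] at h2
    obtain ⟨h3c, heqc, hhI⟩ := h2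
    refine ⟨fun i hi => h1 i ((Multiset.mem_sort _).mpr hi), ?_, h3iff.mpr h3c, h4iff.mpr hhI⟩
    intro i hic
    exact (count_chain_iff ℓ hsor).mpr heqc i (by rw [← hcount]; exact hic)

lemma T2 {n : ℕ} (p : n.Partition) :
    (p.parts.Nodup ∧ ∀ i ∈ p.parts, i % N ∈ A) ↔
    (Chain' (· < ·) (Multiset.sort p.parts (· ≤ ·)) ∧
      ∀ i ∈ Multiset.sort p.parts (· ≤ ·), i % N ∈ A) := by
  set ℓ := Multiset.sort p.parts (· ≤ ·) with hℓ
  have hsor : List.Pairwise (· ≤ ·) ℓ := Multiset.pairwise_sort _ _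
  have hcoe : (↑ℓ : Multiset ℕ) = p.parts := Multiset.sort_eq _ _
  have hnd : p.parts.Nodup ↔ ℓ.Nodup := by rw [← hcoe]; simp
  rw [hnd, nodup_iff_chain_lt ℓ hsor]
  constructor
  · rintro ⟨hc, hr⟩
    exact ⟨hc, fun i hi => hr i ((Multiset.mem_sort _).mp hi)⟩
  · rintro ⟨hc, hr⟩
    exact ⟨hc, fun i hi => hr i ((Multiset.mem_sort _).mpr hi)⟩

theorem main (N : ℕ) (hN : 0 < N) (A : Finset ℕ)
    (hA : A ⊆ Finset.Ico 1 N) (n : ℕ) :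
    Nat.card {p : n.Partition //
      (∀ i ∈ p.parts, i % N = 0 ∨ i % N ∈ A) ∧
      (∀ i, 1 < p.parts.count i → N ∣ i) ∧
      (∀ j, j + 1 < ((Multiset.sort p.parts (· ≤ ·)).reverse).length →
        ((Multiset.sort p.parts (· ≤ ·)).reverse).getD j 0 ≤
          ((Multiset.sort p.parts (· ≤ ·)).reverse).getD (j + 1) 0 + N ∧
        ((N ∣ ((Multiset.sort p.parts (· ≤ ·)).reverse).getD j 0 ∨
          N ∣ ((Multiset.sort p.parts (· ≤ ·)).reverse).getD (j + 1) 0) →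
          ((Multiset.sort p.parts (· ≤ ·)).reverse).getD j 0 <
            ((Multiset.sort p.parts (· ≤ ·)).reverse).getD (j + 1) 0 + N)) ∧
      ((Multiset.sort p.parts (· ≤ ·)).reverse).getD
        (((Multiset.sort p.parts (· ≤ ·)).reverse).length - 1) 0 < N} =
    Nat.card {p : n.Partition // p.parts.Nodup ∧ ∀ i ∈ p.parts, i % N ∈ A} := by
  apply Nat.card_congr
  have e1 := Equiv.subtypeEquivRight (fun p : n.Partition => T1 (A := A) hN p)
  have e2 := sortedListEquiv n (fun ℓ =>
    (∀ i ∈ ℓ, i % N = 0 ∨ i % N ∈ A) ∧ Chain' (rel N) (0 :: ℓ))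
  have e3 : TC N A n ≃ TW N A n := equivCW hN hA
  have e4 : TW N A n ≃ TK N A n := equivWK hA
  have e5 : TK N A n ≃ TF N A n := equivKF hN hA
  have e6 : TF N A n ≃ TB N A n := equivFB hN hA
  have e7 := sortedListEquiv n (fun ℓ =>
    Chain' (· < ·) ℓ ∧ ∀ i ∈ ℓ, i % N ∈ A)
  have e8 := Equiv.subtypeEquivRight (fun p : n.Partition => (T2 (A := A) (N := N) p).symm)
  exact e1.trans (e2.trans (e3.trans (e4.trans (e5.trans (e6.trans (e7.symm.trans e8))))))

end AO

theorem andrews_olsson (N : ℕ) (hN : 0 < N) (A : Finset ℕ)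
    (hA : A ⊆ Finset.Ico 1 N) (n : ℕ) :
    Nat.card {p : n.Partition //
      (∀ i ∈ p.parts, i % N = 0 ∨ i % N ∈ A) ∧
      (∀ i, 1 < p.parts.count i → N ∣ i) ∧
      (∀ j, j + 1 < (sortedParts p).length →
        (sortedParts p).getD j 0 ≤ (sortedParts p).getD (j + 1) 0 + N ∧
        ((N ∣ (sortedParts p).getD j 0 ∨ N ∣ (sortedParts p).getD (j + 1) 0) →
          (sortedParts p).getD j 0 < (sortedParts p).getD (j + 1) 0 + N)) ∧
      (sortedParts p).getD ((sortedParts p).length - 1) 0 < N} =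
    Nat.card {p : n.Partition // p.parts.Nodup ∧ ∀ i ∈ p.parts, i % N ∈ A} :=
  AO.main N hN A hA n
end

section
/- The generating function over all partitions μ into odd parts of x^{n_o(μ)} y^{l(μ)} q^{|μ|} equals the infinite product over j ≥ 1 of (1 + x y q^{2j−1}) / (1 − y^2 q^{4j−2}). -/
open Nat

noncomputable section

/-- The coefficient field `ℚ(x, y)`. -/
abbrev K : Type := FractionRing (MvPolynomial (Fin 2) ℚ)

/-- The indeterminate `x`. -/
def x : K := algebraMap (MvPolynomial (Fin 2) ℚ) K (MvPolynomial.X 0)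

/-- The indeterminate `y`. -/
def y : K := algebraMap (MvPolynomial (Fin 2) ℚ) K (MvPolynomial.X 1)

open PowerSeries in
lemma factorA (i : ℕ) (hi : 0 < i) :
    (1 + PowerSeries.C (R := K) (x * y) * PowerSeries.X ^ i) *
      (1 - PowerSeries.C (R := K) (y ^ 2) * PowerSeries.X ^ (2 * i))⁻¹ =
    PowerSeries.mk (fun k => if i ∣ k then x ^ (k / i % 2) * y ^ (k / i) else 0) := by
  have hu : (PowerSeries.constantCoeff (R := K)) (1 - PowerSeries.C (R := K) (y ^ 2) * PowerSeries.X ^ (2 * i)) ≠ 0 := by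
    simp [zero_pow, Nat.mul_ne_zero two_ne_zero hi.ne']
  have key : (1 + PowerSeries.C (R := K) (x * y) * PowerSeries.X ^ i) =
      PowerSeries.mk (fun k => if i ∣ k then x ^ (k / i % 2) * y ^ (k / i) else 0) *
        (1 - PowerSeries.C (R := K) (y ^ 2) * PowerSeries.X ^ (2 * i)) := by
    ext n
    rw [mul_sub, mul_one, mul_comm (PowerSeries.C (R := K) (y^2)), ← mul_assoc]
    simp only [map_add, map_sub, coeff_mk, PowerSeries.coeff_one,
      PowerSeries.coeff_mul_X_pow', PowerSeries.coeff_mul_C, mul_comm (PowerSeries.C (R := K) (x*y)),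
      PowerSeries.coeff_X_pow]
    by_cases hd : i ∣ n
    · obtain ⟨m, rfl⟩ := hd
      rcases Nat.lt_or_ge m 2 with hm | hm
      · interval_cases m
        · rw [mul_zero, if_pos rfl, if_neg hi.ne, if_pos (dvd_zero i),
            if_neg (by omega : ¬ 2 * i ≤ 0)]
          simp
        · rw [mul_one, if_neg hi.ne', if_pos rfl, if_pos (dvd_refl i),
            if_neg (by omega : ¬ 2 * i ≤ i), Nat.div_self hi]
          simp
      · obtain ⟨k, rfl⟩ : ∃ k, m = k + 2 := ⟨m - 2, by omega⟩
        have hle : 2 * i ≤ i * (k + 2) := by rw [Nat.mul_add]; omega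
        have hne : i * (k + 2) ≠ 0 := by positivity
        have hne' : i * (k + 2) ≠ i := by rw [Nat.mul_add]; omega
        have hsub : i * (k + 2) - 2 * i = i * k := by rw [Nat.mul_add]; omega
        rw [if_pos (dvd_mul_right i (k+2)), if_neg hne, if_neg hne', if_pos hle, hsub,
          if_pos (dvd_mul_right i k), Nat.mul_div_cancel_left _ hi, Nat.mul_div_cancel_left _ hi,
          (by omega : (k + 2) % 2 = k % 2), pow_add]
        ring
    · have h0 : n ≠ 0 := by rintro rfl; exact hd ⟨0, by simp⟩
      have h1 : n ≠ i := by rintro rfl; exact hd ⟨1, by simp⟩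
      rw [if_neg hd, if_neg h0, if_neg h1]
      rcases le_or_gt (2 * i) n with h2 | h2
      · have : ¬ i ∣ n - 2 * i := fun h => hd (by
          have := Nat.dvd_add h (Dvd.intro 2 (mul_comm i 2))
          rwa [Nat.sub_add_cancel h2] at this)
        rw [if_pos h2, if_neg this]
        simp
      · rw [if_neg (Nat.not_le.2 h2)]
        simp
  rw [key, mul_assoc, PowerSeries.mul_inv_cancel _ hu, mul_one]

open Finset in
lemma partB (n : ℕ) (s : Finset ℕ) (hs : ∀ i ∈ s, 0 < i) (W : ℕ → ℕ → K) :
    (∑ p ∈ Finset.univ.filter (fun p : n.Partition => ∀ j ∈ p.parts, j ∈ s),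
      ∏ i ∈ s, W i (p.parts.count i)) =
    PowerSeries.coeff (R := K) n (∏ i ∈ s, PowerSeries.mk fun k => if i ∣ k then W i (k / i) else 0) := by
  classical
  rw [PowerSeries.coeff_prod]
  simp_rw [PowerSeries.coeff_mk, Finset.prod_ite_zero]
  rw [← Finset.sum_filter]
  set Phi : n.Partition → (ℕ →₀ ℕ) :=
    fun p => {
      toFun := fun i => p.parts.count i * i
      support := Finset.filter (fun i => i ≠ 0) p.parts.toFinset
      mem_support_toFun := fun a => by
        simp only [ne_eq, mul_eq_zero, Multiset.count_eq_zero, mem_filter,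
          Multiset.mem_toFinset]
        tauto }
  refine Finset.sum_bij (fun p _ => Phi p) ?_ ?_ ?_ ?_
  · intro p hp
    simp only [mem_filter, mem_univ, true_and] at hp ⊢
    rw [mem_finsuppAntidiag]
    refine ⟨⟨?_, ?_⟩, fun i _ => dvd_mul_left i _⟩
    · conv_rhs => rw [← p.parts_sum]
      rw [sum_multiset_count_of_subset _ s (fun i => by
        simp only [Multiset.mem_toFinset]; exact hp i)]
      rfl
    · intro i hi
      rw [Finsupp.mem_support_iff] at hi
      exact hp i (by
        rw [← Multiset.count_pos]
        exact Nat.pos_of_ne_zero fun h0 => hi (by simp [Phi, h0]))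
  · intro p₁ hp₁ p₂ hp₂ h
    apply Nat.Partition.ext
    simp only [mem_filter, mem_univ, true_and] at hp₁ hp₂
    ext i
    simp only [Phi, Finsupp.mk.injEq] at h
    by_cases hi : i = 0
    · subst hi
      rw [Multiset.count_eq_zero_of_notMem fun a => (hs 0 (hp₁ 0 a)).ne' rfl,
        Multiset.count_eq_zero_of_notMem fun a => (hs 0 (hp₂ 0 a)).ne' rfl]
    · rw [← mul_left_inj' hi]
      rw [funext_iff] at h
      exact h.2 i
  · simp only [Phi, mem_filter, mem_finsuppAntidiag, mem_univ, true_and, and_assoc]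
    rintro f ⟨hf₁, hf₂, hf₃⟩
    refine ⟨⟨∑ i ∈ s, Multiset.replicate (f i / i) i, ?_, ?_⟩, ?_, ?_⟩
    · intro i hi
      simp only [Multiset.mem_sum, Multiset.mem_replicate] at hi
      obtain ⟨t, ht, -, rfl⟩ := hi
      exact hs _ ht
    · simp_rw [Multiset.sum_sum, Multiset.sum_replicate, Nat.nsmul_eq_mul]
      rw [← hf₁]
      exact sum_congr rfl fun i hi => Nat.div_mul_cancel (hf₃ i hi)
    · intro i hi
      simp only [Multiset.mem_sum, Multiset.mem_replicate] at hi
      obtain ⟨t, ht, -, rfl⟩ := hi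
      exact ht
    · ext i
      simp only [Finsupp.coe_mk]
      simp_rw [Multiset.count_sum', Multiset.count_replicate, sum_ite_eq']
      split_ifs with h
      · exact Nat.div_mul_cancel (hf₃ i h)
      · rw [zero_mul, eq_comm, ← Finsupp.notMem_support_iff]
        exact fun hmem => h (hf₂ hmem)
  · intro p hp
    simp only [mem_filter, mem_univ, true_and] at hp
    refine Finset.prod_congr rfl fun i hi => ?_
    simp only [Phi, Finsupp.coe_mk]
    rw [Nat.mul_div_cancel _ (hs i hi)]

/-- An infinite product `∏_{j ≥ 1} g j` of power series, with `g j = 1 + O(q^j)`,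
read off coefficientwise: its `d`-th coefficient is that of any sufficiently long
partial product. -/

theorem odd_parts_generating_function (d : ℕ) :
    (PowerSeries.coeff (R := K) d) (PowerSeries.mk fun n => ∑ p : n.Partition,
        if ∀ i ∈ p.parts, i % 2 = 1 then x ^ no p * y ^ p.parts.card else 0) =
    (PowerSeries.coeff (R := K) d) (∏ j ∈ Finset.Icc 1 (d + 1),
        (1 + PowerSeries.C (R := K) (x * y) * PowerSeries.X ^ (2 * j - 1)) *
          (1 - PowerSeries.C (R := K) (y ^ 2) * PowerSeries.X ^ (4 * j - 2))⁻¹) := by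
  classical
  set e : ℕ ↪ ℕ := ⟨fun j => 2 * j - 1, show Function.Injective (fun j : ℕ => 2 * j - 1) from fun a b h => by simp only at h; omega⟩ with he
  set s : Finset ℕ := (Finset.Icc 1 (d + 1)).map e with hsdef
  have hs : ∀ i ∈ s, 0 < i := by
    simp only [hsdef, Finset.mem_map, Finset.mem_Icc, he, Function.Embedding.coeFn_mk]
    rintro i ⟨j, ⟨hj1, _⟩, rfl⟩
    omega
  have hmem : ∀ i, i ∈ s ↔ (i % 2 = 1 ∧ i ≤ 2 * d + 1) := by
    intro i
    simp only [hsdef, Finset.mem_map, Finset.mem_Icc, he, Function.Embedding.coeFn_mk]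
    constructor
    · rintro ⟨j, ⟨hj1, hj2⟩, rfl⟩; omega
    · rintro ⟨h1, h2⟩; exact ⟨(i + 1) / 2, by omega, by omega⟩
  -- rewrite RHS
  have hrhs : (∏ j ∈ Finset.Icc 1 (d + 1),
        (1 + PowerSeries.C (R := K) (x * y) * PowerSeries.X ^ (2 * j - 1)) *
          (1 - PowerSeries.C (R := K) (y ^ 2) * PowerSeries.X ^ (4 * j - 2))⁻¹) =
      ∏ i ∈ s, PowerSeries.mk fun k =>
        if i ∣ k then (fun i m => x ^ (m % 2) * y ^ m) i (k / i) else 0 := by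
    rw [hsdef, Finset.prod_map]
    refine Finset.prod_congr rfl fun j hj => ?_
    rw [Finset.mem_Icc] at hj
    rw [(by omega : 4 * j - 2 = 2 * (2 * j - 1))]
    exact factorA (2 * j - 1) (by omega)
  rw [PowerSeries.coeff_mk, hrhs, ← partB d s hs (fun i m => x ^ (m % 2) * y ^ m)]
  rw [← Finset.sum_filter]
  have hcond : ∀ p : d.Partition,
      (∀ i ∈ p.parts, i % 2 = 1) ↔ (∀ j ∈ p.parts, j ∈ s) := by
    intro p
    apply forall₂_congr
    intro i hi
    have hin : i ≤ d := by
      simpa [p.parts_sum] using Multiset.single_le_sum (fun _ _ => Nat.zero_le _) _ hi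
    rw [hmem i]
    constructor
    · intro h; exact ⟨h, by omega⟩
    · rintro ⟨h, -⟩; exact h
  have hfil : Finset.univ.filter (fun p : d.Partition => ∀ i ∈ p.parts, i % 2 = 1) =
      Finset.univ.filter (fun p : d.Partition => ∀ j ∈ p.parts, j ∈ s) := by
    exact Finset.filter_congr fun p _ => hcond p
  rw [hfil]
  refine Finset.sum_congr rfl fun p hp => ?_
  rw [Finset.mem_filter] at hp
  have hp2 := hp.2
  -- value equality
  rw [Finset.prod_mul_distrib, Finset.prod_pow_eq_pow_sum, Finset.prod_pow_eq_pow_sum]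
  congr 1
  · -- x part
    congr 1
    have : ∀ i ∈ s, p.parts.count i % 2 = if p.parts.count i % 2 = 1 then 1 else 0 := by
      intro i _
      rcases Nat.mod_two_eq_zero_or_one (p.parts.count i) with h | h <;> simp [h]
    rw [Finset.sum_congr rfl this, Finset.sum_boole]
    rw [no]
    norm_cast
    congr 1
    apply Finset.ext
    intro i
    simp only [Finset.mem_filter, Multiset.mem_toFinset]
    constructor
    · rintro ⟨h1, h2⟩
      exact ⟨hp2 i h1, h2⟩
    · rintro ⟨h1, h2⟩
      exact ⟨Multiset.count_pos.1 (by omega), h2⟩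
  · -- y part
    congr 1
    rw [← Multiset.toFinset_sum_count_eq (p.parts)]
    apply Finset.sum_subset
    · intro i hi
      rw [Multiset.mem_toFinset] at hi
      exact hp2 i hi
    · intro i _ hi
      rw [Multiset.mem_toFinset] at hi
      exact Multiset.count_eq_zero_of_notMem hi
end
end

section
/- The generating function over all partitions λ into distinct parts of x^{l_o(λ)} q^{|λ|} equals the generating function over all partitions μ into odd parts of x^{n_o(μ)} q^{|μ|}. -/
open Nat

namespace Glaisher

open Multiset

lemma bitIndices_sum_two_pow (E : Multiset ℕ) (h : E.Nodup) :
    (((E.map (2 ^ ·)).sum).bitIndices : Multiset ℕ) = E := by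
  have he : ((E.sort (· ≤ ·) : List ℕ) : Multiset ℕ) = E := Multiset.sort_eq E _
  have hn : (E.sort (· ≤ ·)).Nodup := by rw [← Multiset.coe_nodup, he]; exact h
  have hs : List.Pairwise (· < ·) (E.sort (· ≤ ·)) :=
    ((Multiset.pairwise_sort E _).and hn).imp fun h => lt_of_le_of_ne h.1 h.2
  conv_lhs => rw [← he]
  rw [Multiset.map_coe, Multiset.sum_coe, Nat.bitIndices_twoPowsum hs.sortedLT, he]

lemma sum_two_pow_mod_two (E : Multiset ℕ) (h : E.Nodup) :
    (E.map (2 ^ ·)).sum % 2 = if 0 ∈ E then 1 else 0 := by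
  rw [Multiset.sum_nat_mod]
  have h1 : (E.map (2 ^ ·)).map (· % 2) = E.map (fun k => if k = 0 then 1 else 0) := by
    rw [Multiset.map_map]
    refine Multiset.map_congr rfl fun k _ => ?_
    rcases k with _ | k
    · simp
    · simp [Nat.pow_succ, Nat.mul_mod_left]
  have h2 : ∀ (s : Multiset ℕ), (s.map (fun k => if k = 0 then 1 else 0)).sum = s.count 0 := by
    intro s
    induction s using Multiset.induction_on with
    | empty => simp
    | cons b s ih => simp [Multiset.count_cons, ih, eq_comm, add_comm]
  rw [h1, h2]
  by_cases h0 : 0 ∈ E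
  · rw [Multiset.count_eq_one_of_mem h h0]; simp [h0]
  · rw [Multiset.count_eq_zero_of_notMem h0]; simp [h0]

lemma ordCompl_odd {m : ℕ} (hm : m ≠ 0) : ordCompl[2] m % 2 = 1 :=
  Nat.two_dvd_ne_zero.mp (Nat.not_dvd_ordCompl Nat.prime_two hm)

lemma factorization_two_pow_mul {a : ℕ} (ha : a % 2 = 1) (k : ℕ) :
    (2 ^ k * a).factorization 2 = k := by
  have ha0 : a ≠ 0 := by omega
  rw [Nat.factorization_mul (by positivity) ha0]
  simp [Nat.Prime.factorization_pow, Nat.factorization_eq_zero_of_not_dvd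
    (by omega : ¬ 2 ∣ a), Nat.Prime.factorization_self Nat.prime_two]

lemma ordCompl_two_pow_mul {a : ℕ} (ha : a % 2 = 1) (k : ℕ) :
    ordCompl[2] (2 ^ k * a) = a := by
  rw [factorization_two_pow_mul ha k, Nat.mul_div_cancel_left _ (by positivity)]

lemma eq_ordProj_mul {m : ℕ} : m = 2 ^ m.factorization 2 * ordCompl[2] m :=
  (Nat.ordProj_mul_ordCompl_eq_self m 2).symm

lemma sum_map_ite {α : Type*} (s : Multiset α) (p : α → Prop) [DecidablePred p] (f : α → ℕ) :
    (s.map fun m => if p m then f m else 0).sum = ((s.filter p).map f).sum := by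
  induction s using Multiset.induction_on with
  | empty => simp
  | cons b s ih => by_cases h : p b <;> simp [Multiset.filter_cons, h, ih]

lemma bind_replicate {α : Type*} (s : Multiset ℕ) (f : ℕ → ℕ) (a : α) :
    (s.bind fun k => Multiset.replicate (f k) a) =
      Multiset.replicate ((s.map f).sum) a := by
  induction s using Multiset.induction_on with
  | empty => simp
  | cons b s ih => simp [ih, Multiset.replicate_add]

lemma bind_dedup_filter {α : Type*} [DecidableEq α] (s : Multiset α) (g : α → α) :
    ((s.map g).dedup.bind fun a => s.filter (fun m => g m = a)) = s := by
  ext x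
  rw [Multiset.count_bind]
  have h1 : ((s.map g).dedup.map fun a => Multiset.count x (s.filter (fun m => g m = a)))
      = (s.map g).dedup.map fun a => if g x = a then Multiset.count x s else 0 := by
    refine Multiset.map_congr rfl fun a _ => ?_
    rw [Multiset.count_filter]
  rw [h1]
  have h2 : ((s.map g).dedup.map fun a => if g x = a then Multiset.count x s else 0).sum
      = ∑ a ∈ (s.map g).toFinset, if g x = a then Multiset.count x s else 0 := by
    rw [← Multiset.toFinset_val]; rfl
  rw [h2, Finset.sum_ite_eq]
  by_cases hx : x ∈ s
  · simp [Multiset.mem_toFinset, Multiset.mem_map.mpr ⟨x, hx, rfl⟩]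
  · simp [Multiset.count_eq_zero_of_notMem hx]

def toOdd {n : ℕ} (p : n.Partition) : n.Partition where
  parts := p.parts.bind fun m => Multiset.replicate (2 ^ m.factorization 2) (ordCompl[2] m)
  parts_pos := by
    intro a ha
    rw [Multiset.mem_bind] at ha
    obtain ⟨m, hm, ha⟩ := ha
    rw [Multiset.eq_of_mem_replicate ha]
    exact Nat.ordCompl_pos 2 (p.parts_pos hm).ne'
  parts_sum := by
    conv_rhs => rw [← p.parts_sum]
    rw [Multiset.sum_bind]
    rw [show (p.parts.map fun m =>
        (Multiset.replicate (2 ^ m.factorization 2) (ordCompl[2] m)).sum) = p.parts.map id from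
      Multiset.map_congr rfl fun m _ => by
        rw [Multiset.sum_replicate, smul_eq_mul, Nat.ordProj_mul_ordCompl_eq_self]; rfl]
    rw [Multiset.map_id]

def toDistinct {n : ℕ} (p : n.Partition) : n.Partition where
  parts := p.parts.dedup.bind fun a =>
    (((p.parts.count a).bitIndices.map (fun k => 2 ^ k * a) : List ℕ) : Multiset ℕ)
  parts_pos := by
    intro b hb
    rw [Multiset.mem_bind] at hb
    obtain ⟨a, ha, hb⟩ := hb
    rw [Multiset.mem_coe, List.mem_map] at hb
    obtain ⟨k, -, rfl⟩ := hb
    exact Nat.mul_pos (Nat.two_pow_pos k)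
      (p.parts_pos (Multiset.mem_dedup.mp ha))
  parts_sum := by
    conv_rhs => rw [← p.parts_sum, Finset.sum_multiset_count]
    have h1 : ∀ a : ℕ,
        ((((p.parts.count a).bitIndices.map (fun k => 2 ^ k * a) : List ℕ) : Multiset ℕ)).sum
        = p.parts.count a * a := by
      intro a
      rw [Multiset.sum_coe]
      have : ((p.parts.count a).bitIndices.map (fun k => 2 ^ k * a)).sum
          = ((p.parts.count a).bitIndices.map (fun k => 2 ^ k)).sum * a := by
        induction (p.parts.count a).bitIndices with
        | nil => simp
        | cons b l ih => simp [ih, add_mul]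
      rw [this, Nat.twoPowSum_bitIndices]
    rw [Multiset.sum_bind]
    rw [Multiset.map_congr rfl fun a _ => h1 a]
    rw [show (p.parts.dedup.map fun a => p.parts.count a * a).sum
        = ∑ a ∈ p.parts.toFinset, p.parts.count a * a by rw [← Multiset.toFinset_val]; rfl]
    simp [smul_eq_mul]

lemma mem_toOdd {n : ℕ} (p : n.Partition) (a : ℕ) :
    a ∈ (toOdd p).parts ↔ ∃ m ∈ p.parts, ordCompl[2] m = a := by
  simp only [toOdd, Multiset.mem_bind, Multiset.mem_replicate]
  constructor
  · rintro ⟨m, hm, -, rfl⟩; exact ⟨m, hm, rfl⟩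
  · rintro ⟨m, hm, rfl⟩
    exact ⟨m, hm, by positivity, rfl⟩

/-- The multiset of 2-adic valuations of parts of `p` with odd part `a`. -/
def expts {n : ℕ} (p : n.Partition) (a : ℕ) : Multiset ℕ :=
  (p.parts.filter (fun m => ordCompl[2] m = a)).map (fun m => m.factorization 2)

lemma count_toOdd {n : ℕ} (p : n.Partition) (a : ℕ) :
    (toOdd p).parts.count a = ((expts p a).map (2 ^ ·)).sum := by
  show (p.parts.bind fun m =>
      Multiset.replicate (2 ^ m.factorization 2) (ordCompl[2] m)).count a = _
  rw [Multiset.count_bind]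
  have h1 : (p.parts.map fun m =>
      (Multiset.replicate (2 ^ m.factorization 2) (ordCompl[2] m)).count a)
      = p.parts.map fun m => if ordCompl[2] m = a then 2 ^ m.factorization 2 else 0 := by
    refine Multiset.map_congr rfl fun m _ => ?_
    rw [Multiset.count_replicate]
  rw [h1, sum_map_ite, expts, Multiset.map_map]
  rfl

lemma expts_nodup {n : ℕ} {p : n.Partition} (hp : p.parts.Nodup) (a : ℕ) :
    (expts p a).Nodup := by
  refine Multiset.Nodup.map_on ?_ (hp.filter _)
  intro x hx y hy hxy
  rw [Multiset.mem_filter] at hx hy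
  rw [eq_ordProj_mul (m := x), eq_ordProj_mul (m := y), hx.2, hy.2, hxy]

lemma zero_mem_expts {n : ℕ} {p : n.Partition} (a : ℕ) :
    0 ∈ expts p a ↔ a ∈ p.parts ∧ a % 2 = 1 := by
  simp only [expts, Multiset.mem_map, Multiset.mem_filter]
  constructor
  · rintro ⟨m, ⟨hm, rfl⟩, hν⟩
    have hm0 : m ≠ 0 := (p.parts_pos hm).ne'
    have : m = ordCompl[2] m := by rw [hν, pow_zero, Nat.div_one]
    exact ⟨this ▸ hm, ordCompl_odd hm0⟩
  · rintro ⟨ha, hodd⟩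
    have hν : a.factorization 2 = 0 :=
      Nat.factorization_eq_zero_of_not_dvd (by omega)
    have hoc : ordCompl[2] a = a := by rw [hν]; simp
    exact ⟨a, ⟨ha, hoc⟩, hν⟩

lemma count_toOdd_mod_two {n : ℕ} {p : n.Partition} (hp : p.parts.Nodup) (a : ℕ) :
    (toOdd p).parts.count a % 2 = 1 ↔ a ∈ p.parts ∧ a % 2 = 1 := by
  rw [count_toOdd, sum_two_pow_mod_two _ (expts_nodup hp a)]
  rw [← zero_mem_expts (p := p) a]
  split <;> simp_all

lemma toOdd_parts_odd {n : ℕ} (p : n.Partition) :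
    ∀ i ∈ (toOdd p).parts, i % 2 = 1 := by
  intro i hi
  rw [mem_toOdd] at hi
  obtain ⟨m, hm, rfl⟩ := hi
  exact ordCompl_odd (p.parts_pos hm).ne'

lemma toDistinct_nodup {n : ℕ} {p : n.Partition} (hp : ∀ i ∈ p.parts, i % 2 = 1) :
    (toDistinct p).parts.Nodup := by
  show (p.parts.dedup.bind fun a =>
    (((p.parts.count a).bitIndices.map (fun k => 2 ^ k * a) : List ℕ) : Multiset ℕ)).Nodup
  rw [Multiset.nodup_bind]
  constructor
  · intro a ha
    rw [Multiset.coe_nodup]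
    have hap : 0 < a := p.parts_pos (Multiset.mem_dedup.mp ha)
    refine List.Nodup.map_on ?_ (Nat.bitIndices_sorted.nodup)
    intro x _ y _ hxy
    have := Nat.mul_right_cancel hap hxy
    exact Nat.pow_right_injective le_rfl this
  · refine Multiset.Nodup.pairwise ?_ (Multiset.nodup_dedup _)
    intro a ha b hb hab
    have haodd := hp a (Multiset.mem_dedup.mp ha)
    have hbodd := hp b (Multiset.mem_dedup.mp hb)
    rw [Function.onFun, Multiset.disjoint_left]
    rintro x hxa hxb
    rw [Multiset.mem_coe, List.mem_map] at hxa hxb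
    obtain ⟨k, -, rfl⟩ := hxa
    obtain ⟨j, -, hj⟩ := hxb
    apply hab
    have : a = ordCompl[2] (2 ^ k * a) := (ordCompl_two_pow_mul haodd k).symm
    rw [this, ← hj, ordCompl_two_pow_mul hbodd]

lemma toDistinct_toOdd {n : ℕ} {p : n.Partition} (hp : p.parts.Nodup) :
    toDistinct (toOdd p) = p := by
  ext1
  show ((toOdd p).parts.dedup.bind fun a =>
    ((((toOdd p).parts.count a).bitIndices.map (fun k => 2 ^ k * a) : List ℕ) : Multiset ℕ))
    = p.parts
  have hd : (toOdd p).parts.dedup = (p.parts.map (fun m => ordCompl[2] m)).dedup := by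
    rw [Multiset.dedup_ext]
    intro a
    rw [mem_toOdd]
    simp
  rw [hd]
  rw [Multiset.bind_congr (g := fun a => p.parts.filter (fun m => ordCompl[2] m = a)) ?_]
  · exact bind_dedup_filter p.parts _
  · intro a ha
    rw [← Multiset.map_coe, count_toOdd, bitIndices_sum_two_pow _ (expts_nodup hp a)]
    rw [expts, Multiset.map_map]
    refine Eq.trans (Multiset.map_congr rfl fun m hm => ?_) (Multiset.map_id _)
    rw [Multiset.mem_filter] at hm
    show 2 ^ m.factorization 2 * a = m
    rw [← hm.2, Nat.ordProj_mul_ordCompl_eq_self]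

lemma toOdd_toDistinct {n : ℕ} {p : n.Partition} (hp : ∀ i ∈ p.parts, i % 2 = 1) :
    toOdd (toDistinct p) = p := by
  ext1
  show ((p.parts.dedup.bind fun a =>
      (((p.parts.count a).bitIndices.map (fun k => 2 ^ k * a) : List ℕ) : Multiset ℕ)).bind
      fun m => Multiset.replicate (2 ^ m.factorization 2) (ordCompl[2] m)) = p.parts
  rw [Multiset.bind_assoc]
  rw [Multiset.bind_congr (g := fun a => Multiset.replicate (p.parts.count a) a) ?_]
  · conv_rhs => rw [← Multiset.toFinset_sum_count_nsmul_eq p.parts]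
    rw [show (∑ a ∈ p.parts.toFinset, p.parts.count a • ({a} : Multiset ℕ))
        = (p.parts.dedup.map fun a => p.parts.count a • ({a} : Multiset ℕ)).sum by
      rw [← Multiset.toFinset_val]; rfl]
    rw [show (p.parts.dedup.map fun a => p.parts.count a • ({a} : Multiset ℕ))
        = p.parts.dedup.map fun a => Multiset.replicate (p.parts.count a) a from
      Multiset.map_congr rfl fun a _ => Multiset.nsmul_singleton a _]
    rw [Multiset.bind, Multiset.join]
  · intro a ha
    have haodd := hp a (Multiset.mem_dedup.mp ha)
    rw [show ((((p.parts.count a).bitIndices.map (fun k => 2 ^ k * a) : List ℕ) : Multiset ℕ))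
        = ((p.parts.count a).bitIndices : Multiset ℕ).map (fun k => 2 ^ k * a) from
      (Multiset.map_coe _ _).symm]
    rw [Multiset.bind_map]
    rw [Multiset.bind_congr (g := fun k => Multiset.replicate (2 ^ k) a) ?_]
    · rw [bind_replicate, Multiset.map_coe, Multiset.sum_coe, Nat.twoPowSum_bitIndices]
    · intro k _
      rw [factorization_two_pow_mul haodd, Nat.mul_div_cancel_left _ (by positivity : (0:ℕ) < 2 ^ k)]

lemma lo_eq_no {n : ℕ} {p : n.Partition} (hp : p.parts.Nodup) :
    lo p = no (toOdd p) := by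
  have hset : ((toOdd p).parts.toFinset.filter (fun a => (toOdd p).parts.count a % 2 = 1))
      = p.parts.toFinset.filter (fun a => a % 2 = 1) := by
    ext a
    simp only [Finset.mem_filter, Multiset.mem_toFinset]
    rw [count_toOdd_mod_two hp]
    constructor
    · rintro ⟨-, h⟩; exact h
    · rintro ⟨ha, h2⟩
      refine ⟨?_, ha, h2⟩
      rw [← Multiset.count_pos]
      have : (toOdd p).parts.count a % 2 = 1 := (count_toOdd_mod_two hp a).mpr ⟨ha, h2⟩
      omega
  rw [no, hset, lo, Finset.card_def, Finset.filter_val, Multiset.toFinset_val, hp.dedup]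

end Glaisher


set_option maxHeartbeats 2000000 in
/-- Glaisher's refinement as a generating function identity:
`∑_{λ distinct} x^{l_o(λ)} q^{|λ|} = ∑_{μ odd} x^{n_o(μ)} q^{|μ|}`. -/
theorem glaisher_generating_function :
    (PowerSeries.mk fun n => ∑ p : n.Partition,
        if p.parts.Nodup then (Polynomial.X : Polynomial ℤ) ^ lo p else 0) =
    (PowerSeries.mk fun n => ∑ p : n.Partition,
        if ∀ i ∈ p.parts, i % 2 = 1 then (Polynomial.X : Polynomial ℤ) ^ no p else 0) := by
  refine PowerSeries.ext fun n => ?_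
  rw [PowerSeries.coeff_mk, PowerSeries.coeff_mk]
  rw [show (∑ p : n.Partition, if p.parts.Nodup then (Polynomial.X : Polynomial ℤ) ^ lo p else 0)
      = ∑ p ∈ Finset.univ.filter (fun p : n.Partition => p.parts.Nodup),
        (Polynomial.X : Polynomial ℤ) ^ lo p from (Finset.sum_filter (fun p : n.Partition => p.parts.Nodup)
        (fun p => (Polynomial.X : Polynomial ℤ) ^ lo p)).symm,
    show (∑ p : n.Partition, if ∀ i ∈ p.parts, i % 2 = 1 then (Polynomial.X : Polynomial ℤ) ^ no p else 0)
      = ∑ p ∈ Finset.univ.filter (fun p : n.Partition => ∀ i ∈ p.parts, i % 2 = 1),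
        (Polynomial.X : Polynomial ℤ) ^ no p from (Finset.sum_filter (fun p : n.Partition => ∀ i ∈ p.parts, i % 2 = 1)
        (fun p => (Polynomial.X : Polynomial ℤ) ^ no p)).symm]
  refine Finset.sum_nbij' Glaisher.toOdd Glaisher.toDistinct ?_ ?_ ?_ ?_ ?_
  · intro p hp
    rw [Finset.mem_filter] at *
    exact ⟨Finset.mem_univ _, Glaisher.toOdd_parts_odd p⟩
  · intro p hp
    rw [Finset.mem_filter] at *
    exact ⟨Finset.mem_univ _, Glaisher.toDistinct_nodup hp.2⟩
  · intro p hp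
    exact Glaisher.toDistinct_toOdd (Finset.mem_filter.mp hp).2
  · intro p hp
    exact Glaisher.toOdd_toDistinct (Finset.mem_filter.mp hp).2
  · intro p hp
    rw [Glaisher.lo_eq_no (Finset.mem_filter.mp hp).2]
end
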